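/- arXiv:2409.01167 — 5 statements merged into one kernel-verified Lean document; each statement's English description precedes it below -/
import Mathlib

section
/- Let X be an infinite dimensional separable complex Banach space, T a quasinilpotent bounded linear operator on X, and n ≥ 1 a natural number. The following are equivalent: (i) T has a nontrivial closed invariant subspace; (ii) (T − λI)^n has a nontrivial closed invariant subspace for every λ ∈ ℂ; (iii) (T − λI)^n has a nontrivial closed invariant subspace for some λ ∈ ℂ \ {0}. -/
open Finset Polynomial

noncomputable def bc (β : ℂ) (m : ℕ) : ℂ := (∏ i ∈ Finset.range m, (β - i)) / m.factorial

lemma bc_zero (β : ℂ) : bc β 0 = 1 := by simp [bc]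

lemma bc_succ (β : ℂ) (m : ℕ) : bc β (m + 1) = bc β m * ((β - m) / (m + 1)) := by
  have h1 : ((m.factorial : ℂ)) ≠ 0 := Nat.cast_ne_zero.mpr m.factorial_ne_zero
  have h2 : ((m : ℂ) + 1) ≠ 0 := Nat.cast_add_one_ne_zero m
  rw [bc, bc, Finset.prod_range_succ, Nat.factorial_succ, div_mul_div_comm]
  push_cast
  rw [mul_comm ((m:ℂ)+1) (m.factorial:ℂ)]

lemma bc_eq_zero {β : ℂ} {m : ℕ} (i : ℕ) (hi : i < m) (hβ : β = i) : bc β m = 0 := by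
  rw [bc, Finset.prod_eq_zero (Finset.mem_range.mpr hi) (by rw [hβ, sub_self]), zero_div]

lemma bc_natCast (N m : ℕ) : bc (N : ℂ) m = (N.choose m : ℂ) := by
  induction m with
  | zero => simp [bc_zero]
  | succ m ih =>
    rw [bc_succ, ih]
    have h2 : ((m : ℂ) + 1) ≠ 0 := Nat.cast_add_one_ne_zero m
    rcases le_or_gt N m with h | h
    · rcases eq_or_lt_of_le h with rfl | h
      · simp
      · rw [Nat.choose_eq_zero_of_lt h, Nat.choose_eq_zero_of_lt (h.trans (Nat.lt_succ_self m))]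
        simp
    · -- m < N
      have key := Nat.choose_succ_right_eq N m
      have hsub : ((N - m : ℕ) : ℂ) = (N : ℂ) - m := by
        push_cast [Nat.cast_sub h.le]; ring
      have hc : ((N.choose (m+1) : ℂ)) * ((m:ℂ)+1) = (N.choose m : ℂ) * ((N:ℂ) - m) := by
        rw [← hsub]
        exact_mod_cast congrArg (Nat.cast : ℕ → ℂ) key
      rw [mul_div_assoc', div_eq_iff h2]
      linear_combination -hc

lemma bc_norm_le (β : ℂ) (m : ℕ) : ‖bc β m‖ ≤ (‖β‖ + 1) ^ m := by
  induction m with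
  | zero => simp [bc_zero]
  | succ m ih =>
    rw [bc_succ, pow_succ]
    have h1 : ‖(β - m) / (m + 1)‖ ≤ ‖β‖ + 1 := by
      rw [norm_div]
      have hm : ‖((m : ℂ) + 1)‖ = (m : ℝ) + 1 := by
        have : ((m : ℂ) + 1) = ((m + 1 : ℕ) : ℂ) := by push_cast; ring
        rw [this, Complex.norm_natCast]; push_cast; ring
      rw [hm, div_le_iff₀ (by positivity)]
      calc ‖β - (m:ℂ)‖ ≤ ‖β‖ + ‖(m:ℂ)‖ := norm_sub_le _ _
        _ = ‖β‖ + m := by rw [Complex.norm_natCast]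
        _ ≤ (‖β‖ + 1) * ((m:ℝ) + 1) := by nlinarith [norm_nonneg β, Nat.cast_nonneg (α := ℝ) m]
    calc ‖bc β m * ((β - m)/(m+1))‖ = ‖bc β m‖ * ‖(β - m)/(m+1)‖ := norm_mul _ _
      _ ≤ (‖β‖+1)^m * (‖β‖+1) := by
          apply mul_le_mul ih h1 (norm_nonneg _) (by positivity)

noncomputable def bcP (m : ℕ) : Polynomial ℂ :=
  Polynomial.C ((m.factorial : ℂ)⁻¹) * ∏ i ∈ Finset.range m, (Polynomial.X - Polynomial.C (i : ℂ))

lemma bcP_eval (x : ℂ) (m : ℕ) : (bcP m).eval x = bc x m := by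
  simp [bcP, bc, Polynomial.eval_prod, div_eq_inv_mul, mul_comm]

lemma poly_eq_of_nat {p q : Polynomial ℂ} (h : ∀ N : ℕ, p.eval (N : ℂ) = q.eval (N : ℂ)) :
    p = q := by
  have : p - q = 0 := by
    apply Polynomial.eq_zero_of_infinite_isRoot
    apply Set.Infinite.mono (s := Set.range ((↑) : ℕ → ℂ))
    · rintro _ ⟨N, rfl⟩
      simp [Polynomial.IsRoot, h N]
    · exact Set.infinite_range_of_injective Nat.cast_injective
  exact sub_eq_zero.mp this

lemma bc_vandermonde (m : ℕ) (x y : ℂ) :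
    ∑ ij ∈ Finset.HasAntidiagonal.antidiagonal m, bc x ij.1 * bc y ij.2 = bc (x + y) m := by
  -- step 1 : both naturals
  have step1 : ∀ N M : ℕ,
      ∑ ij ∈ Finset.HasAntidiagonal.antidiagonal m, bc (N : ℂ) ij.1 * bc (M : ℂ) ij.2 = bc ((N : ℂ) + M) m := by
    intro N M
    have : ((N : ℂ) + M) = ((N + M : ℕ) : ℂ) := by push_cast; ring
    rw [this, bc_natCast]
    have := Nat.add_choose_eq N M m
    rw [this]
    push_cast
    refine Finset.sum_congr rfl fun ij _ => ?_
    rw [bc_natCast, bc_natCast]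
  -- step 2 : x arbitrary, M natural
  have step2 : ∀ (x : ℂ) (M : ℕ),
      ∑ ij ∈ Finset.HasAntidiagonal.antidiagonal m, bc x ij.1 * bc (M : ℂ) ij.2 = bc (x + M) m := by
    intro x M
    have hpoly : (∑ ij ∈ Finset.HasAntidiagonal.antidiagonal m, Polynomial.C (bc (M : ℂ) ij.2) * bcP ij.1)
        = (bcP m).comp (Polynomial.X + Polynomial.C (M : ℂ)) := by
      apply poly_eq_of_nat
      intro N
      simp only [Polynomial.eval_finset_sum, Polynomial.eval_mul, Polynomial.eval_C,
        Polynomial.eval_comp, Polynomial.eval_add, Polynomial.eval_X, bcP_eval]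
      rw [← step1 N M]
      exact Finset.sum_congr rfl fun ij _ => mul_comm _ _
    have := congrArg (Polynomial.eval x) hpoly
    simpa only [Polynomial.eval_finset_sum, Polynomial.eval_mul, Polynomial.eval_C,
      Polynomial.eval_comp, Polynomial.eval_add, Polynomial.eval_X, bcP_eval,
      mul_comm] using this
  -- step 3 : both arbitrary
  have hpoly : (∑ ij ∈ Finset.HasAntidiagonal.antidiagonal m, Polynomial.C (bc x ij.1) * bcP ij.2)
      = (bcP m).comp (Polynomial.X + Polynomial.C x) := by
    apply poly_eq_of_nat
    intro M
    simp only [Polynomial.eval_finset_sum, Polynomial.eval_mul, Polynomial.eval_C,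
      Polynomial.eval_comp, Polynomial.eval_add, Polynomial.eval_X, bcP_eval]
    rw [step2 x M]
    rw [add_comm]
  have := congrArg (Polynomial.eval y) hpoly
  simpa only [Polynomial.eval_finset_sum, Polynomial.eval_mul, Polynomial.eval_C,
    Polynomial.eval_comp, Polynomial.eval_add, Polynomial.eval_X, bcP_eval, add_comm y x] using this

section QN

open scoped ENNReal NNReal

variable {A : Type*} [NormedRing A] [NormedAlgebra ℂ A] [CompleteSpace A]

/-- Uniform quasinilpotence. -/
def QN (S : A) : Prop := ∀ ε : ℝ, 0 < ε → ∃ c : ℝ, 0 < c ∧ ∀ m : ℕ, 1 ≤ m → ‖S ^ m‖ ≤ c * ε ^ m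

lemma qn_zero : QN (0 : A) := by
  intro ε hε
  refine ⟨1, one_pos, fun m hm => ?_⟩
  rw [zero_pow (Nat.one_le_iff_ne_zero.mp hm), norm_zero, one_mul]
  positivity

lemma qn_smul {S : A} (hS : QN S) (a : ℂ) : QN (a • S) := by
  intro ε hε
  obtain ⟨c, hc, h⟩ := hS (ε / (‖a‖ + 1)) (by positivity)
  refine ⟨c, hc, fun m hm => ?_⟩
  rw [_root_.smul_pow, norm_smul, norm_pow]
  calc ‖a‖ ^ m * ‖S ^ m‖ ≤ ‖a‖ ^ m * (c * (ε / (‖a‖ + 1)) ^ m) := by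
        exact mul_le_mul_of_nonneg_left (h m hm) (by positivity)
    _ = c * (‖a‖ * (ε / (‖a‖ + 1))) ^ m := by rw [mul_pow]; ring
    _ ≤ c * ε ^ m := by
        apply mul_le_mul_of_nonneg_left _ hc.le
        apply pow_le_pow_left₀ (by positivity)
        rw [mul_div_assoc']
        rw [div_le_iff₀ (by positivity)]
        nlinarith [norm_nonneg a]

lemma qn_mul {S V : A} (hS : QN S) (hc : Commute S V) : QN (S * V) := by
  intro ε hε
  obtain ⟨c, hcp, h⟩ := hS (ε / (‖V‖ + 1)) (by positivity)
  refine ⟨c, hcp, fun m hm => ?_⟩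
  rw [hc.mul_pow]
  calc ‖S ^ m * V ^ m‖ ≤ ‖S ^ m‖ * ‖V ^ m‖ := norm_mul_le _ _
    _ ≤ (c * (ε / (‖V‖ + 1)) ^ m) * ‖V‖ ^ m := by
        apply mul_le_mul (h m hm) (norm_pow_le' _ (Nat.lt_of_lt_of_le Nat.zero_lt_one hm))
          (norm_nonneg _) (by positivity)
    _ = c * ((ε / (‖V‖ + 1)) * ‖V‖) ^ m := by rw [mul_pow]; ring
    _ ≤ c * ε ^ m := by
        apply mul_le_mul_of_nonneg_left _ hcp.le
        apply pow_le_pow_left₀ (by positivity)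
        rw [div_mul_eq_mul_div, div_le_iff₀ (by positivity)]
        nlinarith [norm_nonneg V]

lemma qn_add {S₁ S₂ : A} (h₁ : QN S₁) (h₂ : QN S₂) (hc : Commute S₁ S₂) : QN (S₁ + S₂) := by
  intro ε hε
  obtain ⟨c₁, hc₁, hb₁⟩ := h₁ (ε / 4) (by positivity)
  obtain ⟨c₂, hc₂, hb₂⟩ := h₂ (ε / 4) (by positivity)
  set c := max (max c₁ c₂) (max ‖(1 : A)‖ 1) with hcdef
  have hcpos : (0:ℝ) < c := lt_of_lt_of_le one_pos (le_trans (le_max_right _ _) (le_max_right _ _))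
  have hone : ‖(1 : A)‖ ≤ c := le_trans (le_max_left _ _) (le_max_right _ _)
  have hb₁' : ∀ i : ℕ, ‖S₁ ^ i‖ ≤ c * (ε / 4) ^ i := by
    intro i
    rcases Nat.eq_zero_or_pos i with rfl | hi
    · simpa using hone
    · exact le_trans (hb₁ i hi) (mul_le_mul_of_nonneg_right
        (le_trans (le_max_left _ _) (le_max_left _ _)) (by positivity))
  have hb₂' : ∀ i : ℕ, ‖S₂ ^ i‖ ≤ c * (ε / 4) ^ i := by
    intro i
    rcases Nat.eq_zero_or_pos i with rfl | hi
    · simpa using hone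
    · exact le_trans (hb₂ i hi) (mul_le_mul_of_nonneg_right
        (le_trans (le_max_right _ _) (le_max_left _ _)) (by positivity))
  refine ⟨c * c * c, by positivity, fun m hm => ?_⟩
  rw [hc.add_pow]
  have key : ∀ i ∈ Finset.range (m + 1),
      ‖S₁ ^ i * S₂ ^ (m - i) * (m.choose i : A)‖ ≤ (m.choose i : ℝ) * (c * c * c * (ε/4) ^ m) := by
    intro i hi
    have hi' : i ≤ m := Nat.lt_succ_iff.mp (Finset.mem_range.mp hi)
    have h1 : ‖S₁ ^ i * S₂ ^ (m - i) * (m.choose i : A)‖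
        ≤ ‖S₁ ^ i‖ * ‖S₂ ^ (m-i)‖ * ‖((m.choose i : ℕ) : A)‖ :=
      le_trans (norm_mul_le _ _) (mul_le_mul_of_nonneg_right (norm_mul_le _ _) (norm_nonneg _))
    have h2 : ‖((m.choose i : ℕ) : A)‖ ≤ (m.choose i : ℝ) * c :=
      le_trans (Nat.norm_cast_le _) (mul_le_mul_of_nonneg_left hone (Nat.cast_nonneg _))
    have h3 : ‖S₁ ^ i‖ * ‖S₂ ^ (m-i)‖ ≤ (c * (ε/4) ^ i) * (c * (ε/4) ^ (m - i)) :=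
      mul_le_mul (hb₁' i) (hb₂' (m - i)) (norm_nonneg _) (by positivity)
    have h4 : (ε/4) ^ i * (ε/4) ^ (m - i) = (ε/4) ^ m := by
      rw [← pow_add, Nat.add_sub_cancel' hi']
    calc ‖S₁ ^ i * S₂ ^ (m - i) * (m.choose i : A)‖
        ≤ ((c * (ε/4) ^ i) * (c * (ε/4) ^ (m - i))) * ((m.choose i : ℝ) * c) := by
          apply le_trans h1
          apply mul_le_mul h3 h2 (norm_nonneg _) (by positivity)
      _ = (m.choose i : ℝ) * (c * c * c * ((ε/4) ^ i * (ε/4) ^ (m - i))) := by ring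
      _ = (m.choose i : ℝ) * (c * c * c * (ε/4) ^ m) := by rw [h4]
  calc ‖∑ i ∈ Finset.range (m + 1), S₁ ^ i * S₂ ^ (m - i) * (m.choose i : A)‖
      ≤ ∑ i ∈ Finset.range (m + 1), (m.choose i : ℝ) * (c * c * c * (ε/4) ^ m) :=
        le_trans (norm_sum_le _ _) (Finset.sum_le_sum key)
    _ = (2 : ℝ) ^ m * (c * c * c * (ε/4) ^ m) := by
        rw [← Finset.sum_mul]
        congr 1
        rw [← Nat.cast_sum]
        rw [Nat.sum_range_choose]
        push_cast
        ring
    _ ≤ c * c * c * ε ^ m := by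
        have h5 : (2:ℝ) ^ m * (ε/4) ^ m ≤ ε ^ m := by
          rw [← mul_pow]
          apply pow_le_pow_left₀ (by positivity)
          linarith
        calc (2:ℝ) ^ m * (c * c * c * (ε/4) ^ m) = (c*c*c) * ((2:ℝ)^m * (ε/4)^m) := by ring
          _ ≤ (c*c*c) * ε ^ m := mul_le_mul_of_nonneg_left h5 (by positivity)

lemma qn_of_spectrum {T : A} (hT : spectrum ℂ T = {0}) : QN T := by
  have hrad : spectralRadius ℂ T = 0 := by
    simp [spectralRadius, hT]
  have htend := spectrum.pow_nnnorm_pow_one_div_tendsto_nhds_spectralRadius T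
  rw [hrad] at htend
  intro ε hε
  have hev : ∀ᶠ m : ℕ in Filter.atTop,
      (‖T ^ m‖₊ : ℝ≥0∞) ^ (1 / (m:ℝ)) < (ε.toNNReal : ℝ≥0∞) := by
    apply htend.eventually_lt_const
    simpa using (Real.toNNReal_pos.mpr hε)
  obtain ⟨m₀, hm₀⟩ := Filter.eventually_atTop.mp hev
  have hbound : ∀ m : ℕ, 1 ≤ m → m₀ ≤ m → ‖T ^ m‖ ≤ ε ^ m := by
    intro m hm1 hm2
    have hlt := hm₀ m hm2
    have hmr : (0:ℝ) < (m:ℝ) := by exact_mod_cast hm1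
    have h2 : ((‖T ^ m‖₊ : ℝ≥0∞) ^ (1 / (m:ℝ))) ^ (m:ℝ)
        < ((ε.toNNReal : ℝ≥0∞)) ^ (m:ℝ) := ENNReal.rpow_lt_rpow hlt hmr
    rw [← ENNReal.rpow_mul, one_div, inv_mul_cancel₀ (ne_of_gt hmr), ENNReal.rpow_one] at h2
    rw [ENNReal.rpow_natCast, ← ENNReal.coe_pow, ENNReal.coe_lt_coe] at h2
    have h3 : ‖T ^ m‖ ≤ ((ε.toNNReal ^ m : ℝ≥0) : ℝ) := by
      exact_mod_cast h2.le
    rwa [NNReal.coe_pow, Real.coe_toNNReal ε hε.le] at h3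
  set c := (∑ i ∈ Finset.range (m₀ + 1), ‖T ^ i‖ / ε ^ i) + 1 with hcdef
  have hsum_nonneg : ∀ i ∈ Finset.range (m₀ + 1), (0:ℝ) ≤ ‖T ^ i‖ / ε ^ i :=
    fun i _ => by positivity
  have hc1 : (1:ℝ) ≤ c := by
    have := Finset.sum_nonneg hsum_nonneg
    simp only [hcdef]
    linarith
  refine ⟨c, lt_of_lt_of_le one_pos hc1, fun m hm => ?_⟩
  rcases le_or_gt m₀ m with h | h
  · calc ‖T ^ m‖ ≤ ε ^ m := hbound m hm h
      _ ≤ c * ε ^ m := le_mul_of_one_le_left (by positivity) hc1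
  · have hmem : m ∈ Finset.range (m₀ + 1) := Finset.mem_range.mpr (by omega)
    have h1 : ‖T ^ m‖ / ε ^ m ≤ c := by
      have := Finset.single_le_sum hsum_nonneg hmem
      simp only [hcdef]
      linarith
    calc ‖T ^ m‖ = (‖T ^ m‖ / ε ^ m) * ε ^ m := by field_simp
      _ ≤ c * ε ^ m := mul_le_mul_of_nonneg_right h1 (by positivity)

set_option maxHeartbeats 1000000 in
lemma qn_summable {K : A} (hK : QN K) (β : ℂ) :
    Summable (fun m : ℕ => ‖bc β m • K ^ m‖) := by
  obtain ⟨c, hc, h⟩ := hK (1 / (2 * (‖β‖ + 1))) (by positivity)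
  apply (summable_nat_add_iff 1).mp
  refine Summable.of_nonneg_of_le (f := fun m => c * (1/2) ^ (m + 1))
    (fun m => norm_nonneg _) ?_ ?_
  · intro m
    have h1 : ‖bc β (m+1) • K ^ (m+1)‖ = ‖bc β (m+1)‖ * ‖K ^ (m+1)‖ := norm_smul _ _
    rw [h1]
    have hβ : (0:ℝ) < ‖β‖ + 1 := by positivity
    calc ‖bc β (m+1)‖ * ‖K ^ (m+1)‖
        ≤ (‖β‖+1) ^ (m+1) * (c * (1 / (2 * (‖β‖ + 1))) ^ (m+1)) :=
          mul_le_mul (bc_norm_le β (m+1)) (h (m+1) (Nat.le_add_left 1 m))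
            (norm_nonneg _) (by positivity)
      _ = c * ((‖β‖+1) * (1 / (2 * (‖β‖ + 1)))) ^ (m+1) := by rw [mul_pow]; ring
      _ = c * (1/2) ^ (m+1) := by
          congr 2
          field_simp
  · apply Summable.mul_left
    apply (summable_nat_add_iff 1).mpr
    exact summable_geometric_of_lt_one (by norm_num) (by norm_num)

lemma qn_summable_pow {S : A} (hS : QN S) : Summable (fun m : ℕ => ‖S ^ m‖) := by
  obtain ⟨c, hc, h⟩ := hS (1/2) (by norm_num)
  apply (summable_nat_add_iff 1).mp
  refine Summable.of_nonneg_of_le (f := fun m => c * (1/2) ^ (m + 1))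
    (fun m => norm_nonneg _) (fun m => h (m+1) (Nat.le_add_left 1 m)) ?_
  apply Summable.mul_left
  apply (summable_nat_add_iff 1).mpr
  exact summable_geometric_of_lt_one (by norm_num) (by norm_num)

set_option maxHeartbeats 1000000 in
lemma qn_summable' {K : A} (hK : QN K) (β : ℂ) :
    Summable (fun m : ℕ => ‖bc β (m + 1) • K ^ m‖) := by
  obtain ⟨c, hc, h⟩ := hK (1 / (2 * (‖β‖ + 1))) (by positivity)
  apply (summable_nat_add_iff 1).mp
  refine Summable.of_nonneg_of_le (f := fun m => (c * (‖β‖+1)) * (1/2) ^ (m + 1))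
    (fun m => norm_nonneg _) ?_ ?_
  · intro m
    rw [norm_smul]
    have hβ : (0:ℝ) < ‖β‖ + 1 := by positivity
    calc ‖bc β (m+1+1)‖ * ‖K ^ (m+1)‖
        ≤ (‖β‖+1) ^ (m+2) * (c * (1 / (2 * (‖β‖ + 1))) ^ (m+1)) :=
          mul_le_mul (bc_norm_le β (m+2)) (h (m+1) (Nat.le_add_left 1 m))
            (norm_nonneg _) (by positivity)
      _ = (c * (‖β‖+1)) * ((‖β‖+1) * (1 / (2 * (‖β‖ + 1)))) ^ (m+1) := by
          rw [mul_pow]; ring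
      _ = (c * (‖β‖+1)) * (1/2) ^ (m+1) := by
          congr 2
          field_simp
  · apply Summable.mul_left
    apply (summable_nat_add_iff 1).mpr
    exact summable_geometric_of_lt_one (by norm_num) (by norm_num)

lemma mem_of_hasSum {M : Type*} [AddCommMonoid M] [TopologicalSpace M] {S : Type*}
    [SetLike S M] [AddSubmonoidClass S M] {C : S} (hcl : IsClosed (C : Set M))
    {f : ℕ → M} {a : M} (h : HasSum f a) (hf : ∀ m, f m ∈ C) : a ∈ C :=
  hcl.mem_of_tendsto h.tendsto_sum_nat
    (Filter.Eventually.of_forall fun _ => sum_mem fun i _ => hf i)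

lemma qn_isUnit_one_sub {S : A} (hS : QN S) : IsUnit (1 - S) := by
  have hsumm : Summable (fun m : ℕ => S ^ m) := (qn_summable_pow hS).of_norm
  set U := ∑' m : ℕ, S ^ m with hU
  have h2 : ∑' m : ℕ, S ^ (m + 1) = U - 1 := by
    have := Summable.tsum_eq_zero_add hsumm
    rw [pow_zero] at this
    rw [hU, this]
    abel
  have hsucc : Summable (fun m : ℕ => S ^ (m + 1)) := (summable_nat_add_iff 1).mpr hsumm
  have hl : (1 - S) * U = 1 := by
    have hSU : S * U = U - 1 := by
      rw [← Summable.tsum_mul_left S hsumm, ← h2]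
      exact tsum_congr fun m => (pow_succ' S m).symm
    rw [sub_mul, one_mul, hSU]
    abel
  have hr : U * (1 - S) = 1 := by
    have hUS : U * S = U - 1 := by
      rw [← Summable.tsum_mul_right S hsumm, ← h2]
      exact tsum_congr fun m => (pow_succ S m).symm
    rw [mul_sub, mul_one, hUS]
    abel
  exact ⟨⟨1 - S, U, hl, hr⟩, rfl⟩

set_option maxHeartbeats 2000000 in
theorem qn_main {T : A} (hTqn : QN T) {lam : ℂ} (hlam : lam ≠ 0) {n : ℕ} (hn : 1 ≤ n) :
    HasSum (fun m : ℕ => bc ((n : ℂ))⁻¹ m •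
        ((((-lam) ^ n)⁻¹ • (T - lam • 1) ^ n - 1) ^ m))
      (1 - lam⁻¹ • T) := by
  classical
  have hnl : (-lam) ≠ 0 := neg_ne_zero.mpr hlam
  have hnc : ((n : ℂ)) ≠ 0 := Nat.cast_ne_zero.mpr (by omega)
  set K : A := ((-lam) ^ n)⁻¹ • (T - lam • 1) ^ n - 1 with hKdef
  set C : Subalgebra ℂ A := Algebra.elemental ℂ T with hCdef
  have hCcl : IsClosed (C : Set A) := Algebra.elemental.isClosed ℂ T
  have hTC : T ∈ C := Algebra.elemental.self_mem ℂ T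
  have hcomm : ∀ a ∈ C, ∀ b ∈ C, Commute a b := by
    intro a ha b hb
    have h := mul_comm (⟨a, ha⟩ : C) (⟨b, hb⟩ : C)
    exact congrArg Subtype.val h
  have hKC : K ∈ C := by
    apply sub_mem _ (one_mem C)
    exact C.smul_mem (pow_mem (sub_mem hTC (C.smul_mem (one_mem C) lam)) n) _
  -- R and Y
  set R : A := (-lam⁻¹) • T with hRdef
  have hRC : R ∈ C := C.smul_mem hTC _
  have hRqn : QN R := qn_smul hTqn _
  -- (1 + S)^j - 1 lemmas
  have qc_pow : ∀ S : A, S ∈ C → QN S → ∀ j : ℕ,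
      ((1 + S) ^ j - 1) ∈ C ∧ QN ((1 + S) ^ j - 1) := by
    intro S hSC hSqn j
    induction j with
    | zero => simpa using (⟨zero_mem C, qn_zero⟩ : (0:A) ∈ C ∧ QN (0:A))
    | succ j ih =>
      have heq : (1 + S) ^ (j + 1) - 1
          = (((1 + S) ^ j - 1) + S) + ((1 + S) ^ j - 1) * S := by
        rw [pow_succ]; noncomm_ring
      have ihc := ih.1
      have ihq := ih.2
      constructor
      · rw [heq]
        exact add_mem (add_mem ihc hSC) (mul_mem ihc hSC)
      · rw [heq]
        exact qn_add (qn_add ihq hSqn (hcomm _ ihc _ hSC))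
          (qn_mul ihq (hcomm _ ihc _ hSC))
          (hcomm _ (add_mem ihc hSC) _ (mul_mem ihc hSC))
  -- key algebraic identity
  have hTlam : T - lam • 1 = (-lam) • (1 + R) := by
    rw [hRdef, smul_add, smul_smul]
    have h : (-lam) * -lam⁻¹ = 1 := by field_simp
    rw [h, one_smul, neg_smul]
    abel
  have hK1R : K = (1 + R) ^ n - 1 := by
    rw [hKdef, hTlam, _root_.smul_pow, smul_smul, inv_mul_cancel₀ (pow_ne_zero n hnl), one_smul]
  have hKqn : QN K := by rw [hK1R]; exact (qc_pow R hRC hRqn n).2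
  have hYn : (1 + R) ^ n = 1 + K := by rw [hK1R]; abel
  -- the series
  set α : ℂ := ((n : ℂ))⁻¹ with hα
  have hsumm : ∀ β : ℂ, Summable (fun m : ℕ => bc β m • K ^ m) :=
    fun β => (qn_summable hKqn β).of_norm
  set bcS : ℂ → A := fun β => ∑' m : ℕ, bc β m • K ^ m with hbcS
  have hbcS_mem : ∀ β, bcS β ∈ C := by
    intro β
    exact mem_of_hasSum hCcl (hsumm β).hasSum
      (fun m => C.smul_mem (pow_mem hKC m) _)
  have hmul : ∀ β γ : ℂ, bcS β * bcS γ = bcS (β + γ) := by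
    intro β γ
    rw [hbcS]
    rw [tsum_mul_tsum_eq_tsum_sum_antidiagonal_of_summable_norm
      (qn_summable hKqn β) (qn_summable hKqn γ)]
    apply tsum_congr
    intro m
    have : ∀ ij ∈ Finset.HasAntidiagonal.antidiagonal m,
        (bc β ij.1 • K ^ ij.1) * (bc γ ij.2 • K ^ ij.2)
          = (bc β ij.1 * bc γ ij.2) • K ^ m := by
      intro ij hij
      have hij' : ij.1 + ij.2 = m := Finset.HasAntidiagonal.mem_antidiagonal.mp hij
      rw [smul_mul_assoc, mul_smul_comm, smul_smul, ← pow_add, hij']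
    rw [Finset.sum_congr rfl this, ← Finset.sum_smul, bc_vandermonde m β γ]
  have hpow : ∀ j : ℕ, bcS α ^ j = bcS (j * α) := by
    intro j
    induction j with
    | zero =>
      rw [pow_zero]
      have h0 : ((0 : ℕ) : ℂ) * α = 0 := by push_cast; ring
      rw [h0]
      have hb : bcS 0 = 1 := by
        simp only [hbcS]
        rw [tsum_eq_single 0 ?_]
        · simp [bc_zero]
        · intro m hm
          rw [bc_eq_zero 0 (Nat.pos_of_ne_zero hm) (by simp), zero_smul]
      exact hb.symm
    | succ j ih =>
      rw [pow_succ, ih, hmul]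
      congr 1
      push_cast
      ring
  have hBn : bcS α ^ n = 1 + K := by
    rw [hpow n]
    have h1 : (n : ℂ) * α = 1 := mul_inv_cancel₀ hnc
    rw [h1]
    simp only [hbcS]
    rw [tsum_eq_sum (s := ({0, 1} : Finset ℕ)) ?_]
    · rw [Finset.sum_pair (by norm_num)]
      have hb0 : bc 1 0 = 1 := bc_zero 1
      have hb1 : bc 1 1 = 1 := by simp [bc]
      rw [hb0, hb1, pow_zero, pow_one, one_smul, one_smul]
    · intro m hm
      simp only [Finset.mem_insert, Finset.mem_singleton] at hm
      push_neg at hm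
      have h2m : 1 < m := by omega
      rw [bc_eq_zero 1 h2m (by simp), zero_smul]
  -- X - 1 is QN
  set X : A := bcS α with hXdef
  have hXC : X ∈ C := hbcS_mem α
  have hW : Summable (fun m : ℕ => bc α (m + 1) • K ^ m) := (qn_summable' hKqn α).of_norm
  set W : A := ∑' m : ℕ, bc α (m + 1) • K ^ m with hWdef
  have hWC : W ∈ C := mem_of_hasSum hCcl hW.hasSum (fun m => C.smul_mem (pow_mem hKC m) _)
  have hX1 : X - 1 = K * W := by
    have h1 : X = 1 + ∑' m : ℕ, bc α (m + 1) • K ^ (m + 1) := by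
      simp only [hXdef, hbcS]
      rw [Summable.tsum_eq_zero_add (hsumm α)]
      congr 1
      simp [bc_zero]
    have h2 : K * W = ∑' m : ℕ, bc α (m + 1) • K ^ (m + 1) := by
      rw [hWdef, ← Summable.tsum_mul_left K hW]
      exact tsum_congr fun m => by rw [mul_smul_comm, ← pow_succ']
    rw [h1, h2]
    abel
  have hPqn : QN (X - 1) := by
    rw [hX1]
    exact qn_mul hKqn (hcomm K hKC W hWC)
  have hPC : X - 1 ∈ C := sub_mem hXC (one_mem C)
  -- Y
  set Y : A := 1 + R with hYdef
  have hYC : Y ∈ C := add_mem (one_mem C) hRC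
  have hXY_comm : Commute X Y := hcomm X hXC Y hYC
  set Z : A := ∑ i ∈ Finset.range n, X ^ i * Y ^ (n - 1 - i) with hZdef
  have hZX : Z * (X - Y) = 0 := by
    rw [hZdef, hXY_comm.geom_sum₂_mul n, hBn, hYn, sub_self]
  -- Z is invertible
  have hterm : ∀ i ∈ Finset.range n,
      (X ^ i * Y ^ (n - 1 - i) - 1) ∈ C ∧ QN (X ^ i * Y ^ (n - 1 - i) - 1) := by
    intro i _
    set j := n - 1 - i
    have hXi := qc_pow (X - 1) hPC hPqn i
    have hYj := qc_pow R hRC hRqn j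
    rw [show (1 : A) + (X - 1) = X by abel] at hXi
    rw [← hYdef] at hYj
    have heq : X ^ i * Y ^ j - 1
        = ((X ^ i - 1) + (Y ^ j - 1)) + (X ^ i - 1) * (Y ^ j - 1) := by noncomm_ring
    constructor
    · rw [heq]
      exact add_mem (add_mem hXi.1 hYj.1) (mul_mem hXi.1 hYj.1)
    · rw [heq]
      exact qn_add (qn_add hXi.2 hYj.2 (hcomm _ hXi.1 _ hYj.1))
        (qn_mul hXi.2 (hcomm _ hXi.1 _ hYj.1))
        (hcomm _ (add_mem hXi.1 hYj.1) _ (mul_mem hXi.1 hYj.1))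
  have hZsub : Z - (n : ℂ) • 1 = ∑ i ∈ Finset.range n, (X ^ i * Y ^ (n - 1 - i) - 1) := by
    rw [Finset.sum_sub_distrib, Finset.sum_const, Finset.card_range,
      Nat.cast_smul_eq_nsmul ℂ n (1 : A)]
  have hQ : (Z - (n : ℂ) • 1) ∈ C ∧ QN (Z - (n : ℂ) • 1) := by
    rw [hZsub]
    refine Finset.sum_induction _ (fun x => x ∈ C ∧ QN x)
      (fun a b ha hb => ⟨add_mem ha.1 hb.1, qn_add ha.2 hb.2 (hcomm _ ha.1 _ hb.1)⟩)
      ⟨zero_mem C, qn_zero⟩ hterm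
  set Q : A := Z - (n : ℂ) • 1 with hQdef
  set S₀ : A := (-(n : ℂ)⁻¹) • Q with hS₀
  have hS₀qn : QN S₀ := qn_smul hQ.2 _
  have hu1 : IsUnit (1 - S₀) := qn_isUnit_one_sub hS₀qn
  have hZfac : Z = (((n : ℂ)) • (1 : A)) * (1 - S₀) := by
    rw [hS₀, smul_mul_assoc, one_mul, smul_sub, smul_smul]
    have : (n : ℂ) * -(n : ℂ)⁻¹ = -1 := by field_simp
    rw [this, neg_one_smul, sub_neg_eq_add, hQdef]
    abel
  have hu2 : IsUnit (((n : ℂ)) • (1 : A)) := by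
    refine ⟨⟨(n : ℂ) • (1 : A), ((n : ℂ))⁻¹ • (1 : A), ?_, ?_⟩, rfl⟩
    · rw [smul_mul_assoc, one_mul, smul_smul, mul_inv_cancel₀ hnc, one_smul]
    · rw [smul_mul_assoc, one_mul, smul_smul, inv_mul_cancel₀ hnc, one_smul]
  have hZunit : IsUnit Z := by rw [hZfac]; exact hu2.mul hu1
  have hXYeq : X = Y := by
    have h0 : Z * (X - Y) = Z * 0 := by rw [mul_zero]; exact hZX
    have := hZunit.mul_left_cancel h0
    exact sub_eq_zero.mp this
  -- conclusion
  have hfin : X = 1 - lam⁻¹ • T := by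
    rw [hXYeq, hYdef, hRdef, neg_smul]
    abel
  have hhs := (hsumm α).hasSum
  have hXtsum : X = ∑' m : ℕ, bc α m • K ^ m := by simp only [hXdef, hbcS]
  rw [← hXtsum, hfin] at hhs
  exact hhs

end QN

/-- `T` has a nontrivial closed invariant subspace. -/
def HasNontrivialClosedInvariantSubspace {E : Type*} [NormedAddCommGroup E]
    [NormedSpace ℂ E] (T : E →L[ℂ] E) : Prop :=
  ∃ M : Submodule ℂ E, IsClosed (M : Set E) ∧ M ≠ ⊥ ∧ M ≠ ⊤ ∧ ∀ x ∈ M, T x ∈ M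

lemma pow_inv_mem {E : Type*} [NormedAddCommGroup E] [NormedSpace ℂ E]
    {S : E →L[ℂ] E} {M : Submodule ℂ E} (h : ∀ x ∈ M, S x ∈ M) :
    ∀ m : ℕ, ∀ x ∈ M, (S ^ m) x ∈ M := by
  intro m
  induction m with
  | zero => intro x hx; simpa using hx
  | succ m ih =>
    intro x hx
    rw [pow_succ, ContinuousLinearMap.mul_apply]
    exact ih _ (h x hx)

theorem stmt_0 {E : Type*} [NormedAddCommGroup E] [NormedSpace ℂ E] [CompleteSpace E]
    [TopologicalSpace.SeparableSpace E] (hdim : ¬ FiniteDimensional ℂ E)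
    (T : E →L[ℂ] E) (hT : spectrum ℂ T = {0}) (n : ℕ) (hn : 1 ≤ n) :
    List.TFAE
      [HasNontrivialClosedInvariantSubspace T,
       ∀ lam : ℂ, HasNontrivialClosedInvariantSubspace ((T - lam • (1 : E →L[ℂ] E)) ^ n),
       ∃ lam : ℂ, lam ≠ 0 ∧
         HasNontrivialClosedInvariantSubspace ((T - lam • (1 : E →L[ℂ] E)) ^ n)] := by
  tfae_have 1 → 2 := by
    rintro ⟨M, hcl, hbot, htop, hinv⟩ lam
    refine ⟨M, hcl, hbot, htop, ?_⟩
    apply pow_inv_mem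
    intro x hx
    have : (T - lam • (1 : E →L[ℂ] E)) x = T x - lam • x := by
      simp [ContinuousLinearMap.sub_apply]
    rw [this]
    exact M.sub_mem (hinv x hx) (M.smul_mem lam hx)
  tfae_have 2 → 3 := fun h => ⟨1, one_ne_zero, h 1⟩
  tfae_have 3 → 1 := by
    rintro ⟨lam, hlam, M, hcl, hbot, htop, hinv⟩
    refine ⟨M, hcl, hbot, htop, ?_⟩
    intro x hx
    have hqnT : QN T := qn_of_spectrum hT
    set K : E →L[ℂ] E := ((-lam) ^ n)⁻¹ • (T - lam • (1 : E →L[ℂ] E)) ^ n - 1 with hKdef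
    have hKM : ∀ y ∈ M, K y ∈ M := by
      intro y hy
      have : K y = ((-lam) ^ n)⁻¹ • (((T - lam • (1 : E →L[ℂ] E)) ^ n) y) - y := by
        simp [hKdef, ContinuousLinearMap.sub_apply]
      rw [this]
      exact M.sub_mem (M.smul_mem _ (hinv y hy)) hy
    have hmain := qn_main hqnT hlam hn
    have h2 := hmain.mapL (ContinuousLinearMap.apply ℂ E x)
    have h3 : ((1 : E →L[ℂ] E) - lam⁻¹ • T) x ∈ M := by
      apply mem_of_hasSum hcl h2
      intro m
      have : (ContinuousLinearMap.apply ℂ E x) (bc ((n : ℂ))⁻¹ m • K ^ m)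
          = bc ((n : ℂ))⁻¹ m • ((K ^ m) x) := by
        simp
      rw [this]
      exact M.smul_mem _ (pow_inv_mem hKM m x hx)
    have h4 : x - ((1 : E →L[ℂ] E) - lam⁻¹ • T) x = lam⁻¹ • T x := by
      simp [ContinuousLinearMap.sub_apply]
    have h5 : T x = lam • (x - ((1 : E →L[ℂ] E) - lam⁻¹ • T) x) := by
      rw [h4, smul_smul, mul_inv_cancel₀ hlam, one_smul]
    rw [h5]
    exact M.smul_mem lam (M.sub_mem hx h3)
  tfae_finish
end

section
/- Let X be an infinite dimensional separable complex Banach space, T a quasinilpotent bounded linear operator on X, n ≥ 1, and λ₀ ∈ ℂ \ {0}. If (T − λ₀I)^n has a nontrivial closed invariant subspace, then T has a nontrivial closed invariant subspace. -/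
open Filter Finset Polynomial

section StmtAux

variable {𝔸 : Type*} [NormedRing 𝔸] [NormedAlgebra ℂ 𝔸]

/-- Norm bound for generalized binomial coefficients over `ℂ`. -/
lemma norm_ring_choose_le (r : ℂ) : ∀ k : ℕ, ‖Ring.choose r k‖ ≤ (1 + ‖r‖) ^ k := by
  have h1 : ∀ m : ℕ, (m.factorial : ℂ) * Ring.choose r m = (descPochhammer ℤ m).smeval r :=
    fun m => by rw [Ring.descPochhammer_eq_factorial_smul_choose, nsmul_eq_mul]
  intro k
  induction k with
  | zero => simp
  | succ k ih =>
    have key : ((k+1 : ℕ) : ℂ) * Ring.choose r (k+1) = Ring.choose r k * (r - k) := by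
      have h2 : (descPochhammer ℤ (k+1)).smeval r
          = (descPochhammer ℤ k).smeval r * (r - k) := by
        rw [descPochhammer_succ_right, smeval_mul]
        simp [smeval_sub, smeval_X, smeval_natCast]
      have h3 := h1 (k+1)
      rw [h2, ← h1 k, Nat.factorial_succ, Nat.cast_mul] at h3
      have fk : (k.factorial : ℂ) ≠ 0 := Nat.cast_ne_zero.mpr k.factorial_ne_zero
      apply mul_left_cancel₀ fk
      push_cast at h3 ⊢
      ring_nf at h3 ⊢
      linear_combination h3
    have hnorm : ((k:ℝ)+1) * ‖Ring.choose r (k+1)‖ = ‖Ring.choose r k‖ * ‖r - (k:ℂ)‖ := by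
      have := congrArg norm key
      rwa [norm_mul, norm_mul, Complex.norm_natCast, Nat.cast_add, Nat.cast_one] at this
    have hrk : ‖r - (k:ℂ)‖ ≤ (1 + ‖r‖) * ((k:ℝ)+1) := by
      have h4 : ‖r - (k:ℂ)‖ ≤ ‖r‖ + (k:ℝ) := by
        calc ‖r - (k:ℂ)‖ ≤ ‖r‖ + ‖(k:ℂ)‖ := norm_sub_le _ _
        _ = ‖r‖ + (k:ℝ) := by rw [Complex.norm_natCast]
      nlinarith [norm_nonneg r]
    have hchain : ((k:ℝ)+1) * ‖Ring.choose r (k+1)‖ ≤ ((k:ℝ)+1) * (1 + ‖r‖)^(k+1) := by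
      rw [hnorm]
      calc ‖Ring.choose r k‖ * ‖r - (k:ℂ)‖ ≤ (1 + ‖r‖)^k * ((1 + ‖r‖) * ((k:ℝ)+1)) :=
        mul_le_mul ih hrk (norm_nonneg _) (by positivity)
      _ = ((k:ℝ)+1) * (1 + ‖r‖)^(k+1) := by ring
    have hk1 : (0:ℝ) < (k:ℝ)+1 := by positivity
    exact le_of_mul_le_mul_left hchain hk1

variable [CompleteSpace 𝔸]

/-- Quasinilpotent elements have superfast decaying power norms. -/
lemma eventually_norm_pow_le_aux (a : 𝔸) (ha : spectrum ℂ a = {0}) {ε : ℝ} (hε : 0 < ε) :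
    ∀ᶠ k : ℕ in atTop, ‖a ^ k‖ ≤ ε ^ k := by
  have h0 : spectralRadius ℂ a = 0 := by
    rw [spectralRadius, ha]
    simp
  have hlim := spectrum.pow_norm_pow_one_div_tendsto_nhds_spectralRadius a
  rw [h0] at hlim
  have hev : ∀ᶠ k : ℕ in atTop, ENNReal.ofReal (‖a ^ k‖ ^ (1/(k:ℝ))) < ENNReal.ofReal ε :=
    hlim.eventually_lt_const (by simpa using hε)
  filter_upwards [hev, eventually_ge_atTop 1] with k hk hk1
  have hk0 : k ≠ 0 := by omega
  have h1 : ‖a ^ k‖ ^ (1/(k:ℝ)) < ε := by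
    rw [ENNReal.ofReal_lt_ofReal_iff hε] at hk
    exact hk
  have h2 : (‖a ^ k‖ ^ (1/(k:ℝ)))^k ≤ ε ^ k :=
    pow_le_pow_left₀ (Real.rpow_nonneg (norm_nonneg _) _) h1.le k
  calc ‖a ^ k‖ = (‖a ^ k‖ ^ (1/(k:ℝ)))^k := by
        rw [one_div, Real.rpow_inv_natCast_pow (norm_nonneg _) hk0]
  _ ≤ ε ^ k := h2

/-- The master summability lemma. -/
lemma summable_norm_aux {T y : 𝔸}
    (hd : ∀ ε : ℝ, 0 < ε → ∀ᶠ k : ℕ in atTop, ‖T ^ k‖ ≤ ε ^ k) (hy : Commute T y)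
    (c : ℕ → ℂ) (K₀ K : ℝ) (hK : 0 ≤ K) (hc : ∀ k, ‖c k‖ ≤ K₀ * K ^ k) (z : 𝔸) :
    Summable fun k => ‖c k • (z * (T * y) ^ k)‖ := by
  have hK₀ : 0 ≤ K₀ := le_trans (norm_nonneg (c 0)) (by simpa using hc 0)
  set ε : ℝ := ((K+1) * (‖y‖+1) * 2)⁻¹ with hεdef
  have hεpos : 0 < ε := by positivity
  have hhalf : K * ε * (‖y‖+1) ≤ 1/2 := by
    have h2 : (K+1) * (‖y‖+1) * ε = 1/2 := by
      rw [hεdef]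
      have : (K+1) * (‖y‖+1) * 2 ≠ 0 := by positivity
      field_simp
    nlinarith [hεpos, norm_nonneg y]
  apply Summable.of_norm_bounded_eventually_nat (g := fun k => (K₀ * ‖z‖) * (1/2:ℝ)^k)
  · exact (summable_geometric_of_lt_one (by norm_num) (by norm_num)).mul_left _
  · filter_upwards [hd ε hεpos, eventually_ge_atTop 1] with k hk hk1
    rw [norm_norm]
    have hyk : ‖y ^ k‖ ≤ (‖y‖+1) ^ k := by
      calc ‖y ^ k‖ ≤ ‖y‖ ^ k := norm_pow_le' y (by omega)
      _ ≤ (‖y‖+1) ^ k := pow_le_pow_left₀ (norm_nonneg _) (by linarith) k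
    calc ‖c k • (z * (T * y) ^ k)‖ = ‖c k‖ * ‖z * (T ^ k * y ^ k)‖ := by
          rw [norm_smul, hy.mul_pow]
    _ ≤ ‖c k‖ * (‖z‖ * (‖T ^ k‖ * ‖y ^ k‖)) := by
          gcongr
          all_goals first
            | exact (norm_mul_le _ _).trans (by gcongr; exact norm_mul_le _ _)
            | skip
    _ ≤ (K₀ * K ^ k) * (‖z‖ * (ε ^ k * (‖y‖+1) ^ k)) := by
          gcongr
          all_goals first | exact hc k | exact hk | exact hyk
    _ = (K₀ * ‖z‖) * (K * ε * (‖y‖+1)) ^ k := by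
          rw [mul_pow, mul_pow]; ring
    _ ≤ (K₀ * ‖z‖) * (1/2:ℝ)^k := by
          gcongr
          all_goals first | positivity | exact hhalf

lemma commute_tsum_aux (x : 𝔸) {f : ℕ → 𝔸} (hf : Summable f)
    (h : ∀ k, Commute x (f k)) : Commute x (∑' k, f k) := by
  have h1 : x * ∑' k, f k = ∑' k, x * f k := (hf.tsum_mul_left x).symm
  have h2 : (∑' k, f k) * x = ∑' k, f k * x := (hf.tsum_mul_right x).symm
  unfold Commute SemiconjBy
  rw [h1, h2]
  exact tsum_congr h

/-- Neumann-type series inverse. -/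
lemma exists_left_inverse_aux {T y : 𝔸}
    (hd : ∀ ε : ℝ, 0 < ε → ∀ᶠ k : ℕ in atTop, ‖T ^ k‖ ≤ ε ^ k) (hy : Commute T y) :
    ∃ v : 𝔸, v * (1 + T * y) = 1 := by
  set q := T * y with hq
  have hone : ∀ k : ℕ, ‖((-1:ℂ))^k‖ ≤ (1:ℝ) * 1 ^ k := fun k => by simp
  have hsum : Summable fun k => ((-1:ℂ))^k • q^k := by
    have := (summable_norm_aux hd hy (fun k => (-1:ℂ)^k) 1 1 zero_le_one hone 1).of_norm
    simpa [one_mul] using this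
  have hsum' : Summable fun k => ((-1:ℂ))^k • q^(k+1) := by
    have := (summable_norm_aux hd hy (fun k => (-1:ℂ)^k) 1 1 zero_le_one hone q).of_norm
    refine this.congr fun k => ?_
    rw [← pow_succ']
  set v := ∑' k, ((-1:ℂ))^k • q^k with hv
  have hqv : q * v = ∑' k, ((-1:ℂ))^k • q^(k+1) := by
    rw [hv, ← hsum.tsum_mul_left q]
    exact tsum_congr fun k => by rw [mul_smul_comm, ← pow_succ']
  have hs1 : Summable fun k => ((-1:ℂ))^(k+1) • q^(k+1) := by
    refine hsum'.neg.congr fun k => ?_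
    simp [pow_succ]
  have hv1 : v = 1 + ∑' k, ((-1:ℂ))^(k+1) • q^(k+1) := by
    rw [hv, Summable.tsum_eq_zero_add hsum]
    simp
  have hfin : (1 + q) * v = 1 := by
    rw [add_mul, one_mul, hqv, hv1, add_assoc, ← Summable.tsum_add hs1 hsum']
    have hzero : ∀ k : ℕ, ((-1:ℂ))^(k+1) • q^(k+1) + ((-1:ℂ))^k • q^(k+1) = 0 := by
      intro k
      rw [← add_smul]
      have : ((-1:ℂ))^(k+1) + (-1:ℂ)^k = 0 := by
        rw [pow_succ]; ring
      rw [this, zero_smul]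
    simp [hzero]
  have hcomm : Commute (1 + q) v := by
    apply commute_tsum_aux _ hsum
    intro k
    exact (((Commute.one_left q).add_left (Commute.refl q)).pow_right k).smul_right _
  exact ⟨v, by rw [← hcomm.eq]; exact hfin⟩

end StmtAux

theorem stmt_1 {E : Type*} [NormedAddCommGroup E] [NormedSpace ℂ E] [CompleteSpace E]
    [TopologicalSpace.SeparableSpace E] (hdim : ¬ FiniteDimensional ℂ E)
    (T : E →L[ℂ] E) (hT : spectrum ℂ T = {0}) (n : ℕ) (hn : 1 ≤ n)
    (lam₀ : ℂ) (hlam₀ : lam₀ ≠ 0)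
    (h : HasNontrivialClosedInvariantSubspace ((T - lam₀ • (1 : E →L[ℂ] E)) ^ n)) :
    HasNontrivialClosedInvariantSubspace T := by
  obtain ⟨M, hMc, hMbot, hMtop, hMinv⟩ := h
  set B : E →L[ℂ] E := T - lam₀ • 1 with hB
  set μ : ℂ := (-lam₀)^n with hμdef
  have hμ : μ ≠ 0 := pow_ne_zero _ (neg_ne_zero.mpr hlam₀)
  have hTB : Commute T B := (Commute.refl T).sub_right ((Commute.one_right T).smul_right lam₀)
  set E₀ : E →L[ℂ] E := ∑ i ∈ range n, B ^ i * ((-lam₀) • 1) ^ (n - 1 - i) with hE₀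
  have hTE₀ : Commute T E₀ := Commute.sum_right _ _ _ fun i _ =>
    (hTB.pow_right i).mul_right (((Commute.one_right T).smul_right _).pow_right _)
  have hgeom : E₀ * T = B ^ n - μ • 1 := by
    have hc : Commute B ((-lam₀) • (1 : E →L[ℂ] E)) := (Commute.one_right B).smul_right _
    have hgs := hc.geom_sum₂_mul n
    have h1 : B - (-lam₀) • (1 : E →L[ℂ] E) = T := by
      rw [hB, neg_smul, sub_neg_eq_add, sub_add_cancel]
    have h2 : ((-lam₀) • (1 : E →L[ℂ] E))^n = μ • 1 := by
      rw [_root_.smul_pow, one_pow, hμdef]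
    rw [h1, h2] at hgs
    exact hgs
  set A : E →L[ℂ] E := μ⁻¹ • (B ^ n - μ • 1) with hA
  set w₀ : E →L[ℂ] E := μ⁻¹ • E₀ with hw₀
  have hTw₀ : Commute T w₀ := hTE₀.smul_right μ⁻¹
  have hATw : A = T * w₀ := by
    rw [hTw₀.eq, hA, ← hgeom, hw₀, smul_mul_assoc]
  have hTA : Commute T A := by rw [hATw]; exact (Commute.refl T).mul_right hTw₀
  have hdT : ∀ ε:ℝ, 0 < ε → ∀ᶠ k in atTop, ‖T^k‖ ≤ ε^k :=
    fun ε hε => eventually_norm_pow_le_aux T hT hε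
  -- the binomial series
  have hGsum : ∀ r : ℂ, Summable fun k => ‖Ring.choose r k • A^k‖ := by
    intro r
    have := summable_norm_aux hdT hTw₀ (fun k => Ring.choose r k) 1 (1+‖r‖)
      (by positivity) (fun k => by rw [one_mul]; exact norm_ring_choose_le r k) 1
    refine this.congr fun k => ?_
    rw [one_mul, ← hATw]
  set G : ℂ → (E →L[ℂ] E) := fun r => ∑' k, Ring.choose r k • A ^ k with hG
  have hGs : ∀ r, Summable fun k => Ring.choose r k • A ^ k := fun r => (hGsum r).of_norm
  have hGmul : ∀ r s : ℂ, G r * G s = G (r + s) := by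
    intro r s
    rw [hG]
    simp only
    rw [tsum_mul_tsum_eq_tsum_sum_antidiagonal_of_summable_norm (hGsum r) (hGsum s)]
    refine tsum_congr fun k => ?_
    have hterm : ∀ ij ∈ antidiagonal k,
        (Ring.choose r ij.1 • A^ij.1) * (Ring.choose s ij.2 • A^ij.2)
          = (Ring.choose r ij.1 * Ring.choose s ij.2) • A^k := by
      intro ij hij
      rw [smul_mul_smul_comm, ← pow_add, Finset.HasAntidiagonal.mem_antidiagonal.mp hij]
    rw [Finset.sum_congr rfl hterm, ← Finset.sum_smul, ← Ring.add_choose_eq k (Commute.all r s)]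
  have hGzero : G 0 = 1 := by
    rw [hG]
    simp only
    rw [Summable.tsum_eq_zero_add (hGs 0)]
    have h0 : ∀ k:ℕ, Ring.choose (0:ℂ) (k+1) = 0 := by
      intro k
      have := Ring.choose_natCast (R := ℂ) 0 (k+1)
      simpa using this
    simp [h0]
  have hGone : G 1 = 1 + A := by
    rw [hG]
    simp only
    have hz : ∀ k ∉ ({0,1} : Finset ℕ), Ring.choose (1:ℂ) k • A^k = 0 := by
      intro k hk
      have h1 : Ring.choose (1:ℂ) k = ((Nat.choose 1 k : ℕ) : ℂ) := by
        have := Ring.choose_natCast (R := ℂ) 1 k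
        simpa using this
      have hklt : 1 < k := by simp at hk; omega
      have h2 : Nat.choose 1 k = 0 := Nat.choose_eq_zero_of_lt hklt
      simp [h1, h2]
    rw [tsum_eq_sum hz, Finset.sum_pair (by norm_num : (0:ℕ) ≠ 1)]
    have hc0 : Ring.choose (1:ℂ) 0 = 1 := by
      have := Ring.choose_natCast (R := ℂ) 1 0
      simpa using this
    have hc1 : Ring.choose (1:ℂ) 1 = 1 := by
      have := Ring.choose_natCast (R := ℂ) 1 1
      simpa using this
    simp [hc0, hc1]
  have hn0 : (n:ℂ) ≠ 0 := Nat.cast_ne_zero.mpr (by omega)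
  have hGpow : ∀ m : ℕ, G ((n:ℂ)⁻¹) ^ m = G (m * (n:ℂ)⁻¹) := by
    intro m
    induction m with
    | zero => rw [pow_zero, Nat.cast_zero, zero_mul, hGzero]
    | succ m ih =>
      rw [pow_succ, ih, hGmul]
      congr 1
      push_cast
      ring
  have hGn : G ((n:ℂ)⁻¹) ^ n = 1 + A := by
    rw [hGpow n, mul_inv_cancel₀ hn0, hGone]
  set C : E →L[ℂ] E := (-lam₀) • G ((n:ℂ)⁻¹) with hC
  have hCn : C ^ n = B ^ n := by
    have hμA : μ • A = B^n - μ • 1 := by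
      rw [hA, smul_smul, mul_inv_cancel₀ hμ, one_smul]
    rw [hC, _root_.smul_pow, hGn, ← hμdef, smul_add, hμA]
    abel
  have hTG : Commute T (G ((n:ℂ)⁻¹)) :=
    commute_tsum_aux T (hGs _) (fun k => ((hTA.pow_right k).smul_right _))
  have hTC : Commute T C := hTG.smul_right _
  have hBC : Commute B C := hTC.sub_left ((Commute.one_left C).smul_left lam₀)
  set D : E →L[ℂ] E := ∑ i ∈ range n, B ^ i * C ^ (n - 1 - i) with hD
  have hDd : D * (B - C) = 0 := by
    rw [hD, hBC.geom_sum₂_mul, hCn, sub_self]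
  -- representation of elements as c • 1 + T * y
  set P : (E →L[ℂ] E) → ℂ → Prop := fun x c => ∃ y, Commute T y ∧ x = c • 1 + T * y with hP
  have hPmul : ∀ x c x' c', P x c → P x' c' → P (x*x') (c*c') := by
    rintro x c x' c' ⟨y, hy, rfl⟩ ⟨y', hy', rfl⟩
    refine ⟨c' • y + c • y' + y * (T * y'), ?_, ?_⟩
    · exact ((hy.smul_right c').add_right (hy'.smul_right c)).add_right
        (hy.mul_right ((Commute.refl T).mul_right hy'))
    · simp only [add_mul, mul_add, smul_add, smul_mul_assoc, mul_smul_comm, smul_smul,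
        mul_one, one_mul, mul_assoc, mul_comm c c']
      abel
  have hPadd : ∀ x c x' c', P x c → P x' c' → P (x+x') (c+c') := by
    rintro x c x' c' ⟨y, hy, rfl⟩ ⟨y', hy', rfl⟩
    refine ⟨y + y', hy.add_right hy', ?_⟩
    rw [add_smul, mul_add]
    abel
  have hPB : P B (-lam₀) := by
    refine ⟨1, Commute.one_right T, ?_⟩
    rw [hB, mul_one, neg_smul, sub_eq_add_neg, add_comm]
  have hPC : P C (-lam₀) := by
    set r : ℂ := (n:ℂ)⁻¹ with hr
    have hs' : Summable fun k => Ring.choose r (k+1) • (w₀ * A^k) := by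
      have := (summable_norm_aux hdT hTw₀ (fun k => Ring.choose r (k+1)) (1+‖r‖) (1+‖r‖)
        (by positivity) (fun k => by
          rw [← pow_succ']
          exact norm_ring_choose_le r (k+1)) w₀).of_norm
      refine this.congr fun k => ?_
      rw [← hATw]
    have hGrep : G r = 1 + T * ∑' k, Ring.choose r (k+1) • (w₀ * A^k) := by
      rw [hG]
      simp only
      rw [Summable.tsum_eq_zero_add (hGs r)]
      congr 1
      · simp
      · rw [← hs'.tsum_mul_left T]
        refine tsum_congr fun k => ?_
        rw [mul_smul_comm, ← mul_assoc, ← hATw, ← pow_succ']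
    refine ⟨(-lam₀) • ∑' k, Ring.choose r (k+1) • (w₀ * A^k), ?_, ?_⟩
    · refine Commute.smul_right ?_ _
      exact commute_tsum_aux T hs' (fun k => (hTw₀.mul_right (hTA.pow_right k)).smul_right _)
    · rw [hC, hGrep, smul_add, mul_smul_comm]
  have hPsum : ∀ (s : Finset ℕ) (f : ℕ → E →L[ℂ] E) (g : ℕ → ℂ),
      (∀ i ∈ s, P (f i) (g i)) → P (∑ i ∈ s, f i) (∑ i ∈ s, g i) := by
    intro s
    induction s using Finset.induction_on with
    | empty => intro f g _; exact ⟨0, Commute.zero_right T, by simp⟩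
    | insert _ _ hns ih =>
      intro f g hfg
      rw [Finset.sum_insert hns, Finset.sum_insert hns]
      exact hPadd _ _ _ _ (hfg _ (mem_insert_self _ _))
        (ih f g fun i hi => hfg i (mem_insert_of_mem hi))
  have hPpow : ∀ (x : E →L[ℂ] E) (c : ℂ), P x c → ∀ m : ℕ, P (x^m) (c^m) := by
    intro x c hx m
    induction m with
    | zero => rw [pow_zero, pow_zero]; exact ⟨0, Commute.zero_right T, by simp⟩
    | succ m ih => rw [pow_succ, pow_succ]; exact hPmul _ _ _ _ ih hx
  have hPD : P D ((n:ℂ) * (-lam₀)^(n-1)) := by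
    have hsum := hPsum (range n) (fun i => B ^ i * C ^ (n - 1 - i))
      (fun _ => (-lam₀)^(n-1)) ?_
    · rw [Finset.sum_const, card_range, nsmul_eq_mul] at hsum
      exact hsum
    · intro i hi
      have hilt : i < n := mem_range.mp hi
      have hexp : (-lam₀ : ℂ)^(n-1) = (-lam₀)^i * (-lam₀)^(n-1-i) := by
        rw [← pow_add]
        congr 1
        omega
      rw [hexp]
      exact hPmul _ _ _ _ (hPpow _ _ hPB i) (hPpow _ _ hPC (n-1-i))
  set c₀ : ℂ := (n:ℂ) * (-lam₀)^(n-1) with hc₀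
  have hc₀0 : c₀ ≠ 0 := mul_ne_zero hn0 (pow_ne_zero _ (neg_ne_zero.mpr hlam₀))
  obtain ⟨y, hy, hDeq⟩ := hPD
  have hDfac : D = c₀ • (1 + T * (c₀⁻¹ • y)) := by
    rw [hDeq, smul_add, mul_smul_comm, smul_smul, mul_inv_cancel₀ hc₀0, one_smul]
  obtain ⟨v, hv⟩ := exists_left_inverse_aux hdT (hy.smul_right c₀⁻¹)
  have hBCeq : B = C := by
    have h1 : (c₀⁻¹ • v) * D = 1 := by
      rw [hDfac, smul_mul_smul_comm, inv_mul_cancel₀ hc₀0, one_smul, hv]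
    have h2 : B - C = 0 := by
      calc B - C = ((c₀⁻¹ • v) * D) * (B - C) := by rw [h1, one_mul]
      _ = (c₀⁻¹ • v) * (D * (B - C)) := mul_assoc _ _ _
      _ = 0 := by rw [hDd, mul_zero]
    exact sub_eq_zero.mp h2
  have hTeq : T = lam₀ • 1 + C := by
    rw [← hBCeq, hB]
    abel
  -- invariance
  refine ⟨M, hMc, hMbot, hMtop, ?_⟩
  intro x hx
  have hAmem : ∀ z ∈ M, A z ∈ M := by
    intro z hz
    rw [hA]
    simp only [ContinuousLinearMap.smul_apply, ContinuousLinearMap.sub_apply,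
      ContinuousLinearMap.smul_apply, ContinuousLinearMap.one_apply]
    exact M.smul_mem _ (M.sub_mem (hMinv z hz) (M.smul_mem _ hz))
  have hAk : ∀ k, ∀ z ∈ M, (A^k) z ∈ M := by
    intro k
    induction k with
    | zero => intro z hz; simpa using hz
    | succ k ih =>
      intro z hz
      rw [pow_succ]
      rw [ContinuousLinearMap.mul_apply]
      exact ih _ (hAmem z hz)
  have hGmem : (G ((n:ℂ)⁻¹)) x ∈ M := by
    have hs := hGs ((n:ℂ)⁻¹)
    have hsx : HasSum (fun k => (Ring.choose ((n:ℂ)⁻¹) k • A^k) x) ((G ((n:ℂ)⁻¹)) x) := by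
      have := (hs.hasSum).mapL (ContinuousLinearMap.apply ℂ E x)
      simpa using this
    refine hMc.mem_of_tendsto hsx.tendsto_sum_nat (Eventually.of_forall fun m => ?_)
    refine M.sum_mem fun k _ => ?_
    rw [ContinuousLinearMap.smul_apply]
    exact M.smul_mem _ (hAk k x hx)
  rw [hTeq]
  simp only [ContinuousLinearMap.add_apply, ContinuousLinearMap.smul_apply,
    ContinuousLinearMap.one_apply]
  exact M.add_mem (M.smul_mem _ hx) (by rw [hC]; exact M.smul_mem _ hGmem)
end

section
/- Let X be an infinite dimensional separable complex Banach space and T a quasinilpotent bounded linear operator on X. Then T has a nontrivial closed invariant subspace if and only if for some (equivalently, for every) a, c ∈ ℂ and b ∈ ℂ \ {0}, the operator aT² + bT + cI has a nontrivial closed invariant subspace. -/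
open Filter Finset

lemma catalan_le_four_pow (n : ℕ) : catalan n ≤ 4 ^ n := by
  have h2 : catalan n ≤ n.centralBinom := by
    calc catalan n ≤ (n + 1) * catalan n := Nat.le_mul_of_pos_left _ (Nat.succ_pos n)
    _ = n.centralBinom := succ_mul_catalan_eq_centralBinom n
  refine h2.trans ?_
  have h3 : (2 * n).choose n ≤ ∑ m ∈ Finset.range (2 * n + 1), (2 * n).choose m := by
    apply Finset.single_le_sum (fun i _ => Nat.zero_le _)
    simp [Nat.lt_succ_iff]; omega
  calc n.centralBinom = (2 * n).choose n := Nat.centralBinom_eq_two_mul_choose n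
  _ ≤ ∑ m ∈ Finset.range (2 * n + 1), (2 * n).choose m := h3
  _ = 2 ^ (2 * n) := Nat.sum_range_choose (2 * n)
  _ = 4 ^ n := by norm_num [pow_mul]

section QuasiDecay

variable {A : Type*} [NormedRing A] [NormedAlgebra ℂ A] [CompleteSpace A]

lemma quasi_decay (T : A) (hT : spectralRadius ℂ T = 0) {ε : ℝ} (hε : 0 < ε) :
    ∃ C : ℝ, 1 ≤ C ∧ ∀ n, ‖T ^ n‖ ≤ C * ε ^ n := by
  set m := min ε 1 with hm
  have hm0 : 0 < m := lt_min hε one_pos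
  have htend := spectrum.pow_norm_pow_one_div_tendsto_nhds_spectralRadius (a := T)
  rw [hT] at htend
  have hev : ∀ᶠ n : ℕ in atTop, ENNReal.ofReal (‖T ^ n‖ ^ (1 / n : ℝ)) < ENNReal.ofReal m :=
    htend.eventually_lt_const (by simpa using hm0)
  obtain ⟨N, hN⟩ := (hev.and (eventually_ge_atTop 1)).exists_forall_of_atTop
  have key : ∀ n, N ≤ n → ‖T ^ n‖ ≤ ε ^ n := by
    intro n hn
    obtain ⟨h1, h2⟩ := hN n hn
    have h3 : ‖T ^ n‖ ^ (1 / n : ℝ) < m := by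
      rwa [ENNReal.ofReal_lt_ofReal_iff hm0] at h1
    have hx0 : (0:ℝ) ≤ ‖T ^ n‖ := norm_nonneg _
    have hn0 : (n : ℝ) ≠ 0 := by exact_mod_cast Nat.one_le_iff_ne_zero.mp h2
    have h4 : (‖T ^ n‖ ^ (1 / n : ℝ)) ^ n < m ^ n := by
      apply pow_lt_pow_left₀ h3 (Real.rpow_nonneg hx0 _)
      omega
    have h5 : (‖T ^ n‖ ^ (1 / n : ℝ)) ^ n = ‖T ^ n‖ := by
      rw [← Real.rpow_natCast (‖T ^ n‖ ^ (1 / n : ℝ)) n, ← Real.rpow_mul hx0,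
        one_div, inv_mul_cancel₀ hn0, Real.rpow_one]
    calc ‖T ^ n‖ = (‖T ^ n‖ ^ (1 / n : ℝ)) ^ n := h5.symm
    _ ≤ m ^ n := h4.le
    _ ≤ ε ^ n := pow_le_pow_left₀ hm0.le (min_le_left _ _) n
  set C := 1 + ∑ k ∈ Finset.range N, ‖T ^ k‖ / ε ^ k with hC
  have hCsum_nonneg : 0 ≤ ∑ k ∈ Finset.range N, ‖T ^ k‖ / ε ^ k :=
    Finset.sum_nonneg fun i _ => div_nonneg (norm_nonneg _) (pow_nonneg hε.le _)
  refine ⟨C, by rw [hC]; linarith, fun n => ?_⟩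
  rcases lt_or_ge n N with h | h
  · have h6 : ‖T ^ n‖ / ε ^ n ≤ ∑ k ∈ Finset.range N, ‖T ^ k‖ / ε ^ k :=
      Finset.single_le_sum (f := fun k => ‖T ^ k‖ / ε ^ k)
        (fun i _ => div_nonneg (norm_nonneg _) (pow_nonneg hε.le _)) (Finset.mem_range.mpr h)
    have hε' : (0:ℝ) < ε ^ n := pow_pos hε n
    rw [div_le_iff₀ hε'] at h6
    calc ‖T ^ n‖ ≤ (∑ k ∈ Finset.range N, ‖T ^ k‖ / ε ^ k) * ε ^ n := h6
    _ ≤ C * ε ^ n := by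
        apply mul_le_mul_of_nonneg_right _ hε'.le
        rw [hC]; linarith
  · calc ‖T ^ n‖ ≤ ε ^ n := key n h
    _ ≤ C * ε ^ n := le_mul_of_one_le_left (pow_nonneg hε.le n) (by rw [hC]; linarith)

end QuasiDecay

section Key

open ContinuousLinearMap in
/-- A quasinilpotent element of a complex Banach algebra is the sum of a norm-convergent
series in the powers `U^(k+1)` of `U = a•T² + b•T` (for `b ≠ 0`). -/
lemma sqrt_series_eq {A : Type*} [NormedRing A] [NormedAlgebra ℂ A] [CompleteSpace A]
    (T : A) (hrad : spectralRadius ℂ T = 0) (a b : ℂ) (hb : b ≠ 0) :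
    ∃ f : ℕ → ℂ, HasSum (fun k => f k • (a • T ^ 2 + b • T) ^ (k + 1)) T := by
  classical
  obtain ⟨w, hw⟩ : ∃ w : ℂ, w = a / b ^ 2 := ⟨_, rfl⟩
  obtain ⟨μ, hμ⟩ : ∃ μ : ℕ → ℂ, μ = fun k => (catalan k : ℂ) * (-w) ^ k := ⟨_, rfl⟩
  obtain ⟨U, hUdef⟩ : ∃ U : A, U = a • T ^ 2 + b • T := ⟨_, rfl⟩
  rw [← hUdef]
  -- commutation facts
  have hT1 : Commute T (a • T + b • 1) :=
    ((Commute.refl T).smul_right a).add_right ((Commute.one_right T).smul_right b)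
  have hTU : Commute T U := by
    rw [hUdef]
    exact (((Commute.refl T).pow_right 2).smul_right a).add_right ((Commute.refl T).smul_right b)
  have hUfact : U = T * (a • T + b • 1) := by
    rw [hUdef, mul_add, mul_smul_comm, mul_smul_comm, mul_one, ← pow_two]
  -- norm bounds
  obtain ⟨R, hRpos, hRge⟩ : ∃ R : ℝ, 0 < R ∧ ‖a • T + b • (1 : A)‖ ≤ R :=
    ⟨‖a • T + b • (1 : A)‖ + 1, by positivity, by linarith⟩
  obtain ⟨q, hqpos, hqge⟩ : ∃ q : ℝ, 0 < q ∧ 4 * ‖w‖ ≤ q :=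
    ⟨4 * ‖w‖ + 1, by positivity, by linarith⟩
  obtain ⟨ε₀, hε₀0, hε₀half⟩ : ∃ e : ℝ, 0 < e ∧ q * (e * R) ≤ 1 / 2 := by
    refine ⟨1 / (2 * q * R), by positivity, le_of_eq ?_⟩
    field_simp
  obtain ⟨C, hC1, hC⟩ := quasi_decay T hrad hε₀0
  have hC0 : 0 < C := lt_of_lt_of_le one_pos hC1
  have hUk : ∀ k, ‖U ^ k‖ ≤ C * (ε₀ * R) ^ k := by
    intro k
    rcases Nat.eq_zero_or_pos k with rfl | hk
    · simpa using hC 0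
    rw [hUfact, hT1.mul_pow]
    calc ‖T ^ k * (a • T + b • 1) ^ k‖ ≤ ‖T ^ k‖ * ‖(a • T + b • 1) ^ k‖ := norm_mul_le _ _
    _ ≤ (C * ε₀ ^ k) * ‖a • T + b • (1 : A)‖ ^ k :=
        mul_le_mul (hC k) (norm_pow_le' _ hk) (norm_nonneg _) (by positivity)
    _ ≤ (C * ε₀ ^ k) * R ^ k := by
        apply mul_le_mul_of_nonneg_left _ (by positivity)
        exact pow_le_pow_left₀ (norm_nonneg _) hRge k
    _ = C * (ε₀ * R) ^ k := by rw [mul_pow]; ring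
  have hμb : ∀ k, ‖μ k‖ ≤ q ^ k := by
    intro k
    rw [hμ]
    simp only [norm_mul, norm_pow, norm_neg, Complex.norm_natCast]
    calc (catalan k : ℝ) * ‖w‖ ^ k ≤ (4 ^ k : ℝ) * ‖w‖ ^ k := by
          apply mul_le_mul_of_nonneg_right _ (by positivity)
          exact_mod_cast catalan_le_four_pow k
    _ = (4 * ‖w‖) ^ k := by rw [mul_pow]
    _ ≤ q ^ k := pow_le_pow_left₀ (by positivity) hqge k
  obtain ⟨f, hf⟩ : ∃ f : ℕ → A, f = fun k => μ k • U ^ k := ⟨_, rfl⟩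
  have hfb : ∀ k, ‖f k‖ ≤ C * (1 / 2) ^ k := by
    intro k
    rw [hf]
    calc ‖μ k • U ^ k‖ = ‖μ k‖ * ‖U ^ k‖ := norm_smul _ _
    _ ≤ q ^ k * (C * (ε₀ * R) ^ k) :=
        mul_le_mul (hμb k) (hUk k) (norm_nonneg _) (by positivity)
    _ = C * (q * (ε₀ * R)) ^ k := by rw [mul_pow]; ring
    _ ≤ C * (1 / 2) ^ k := by
        apply mul_le_mul_of_nonneg_left _ hC0.le
        exact pow_le_pow_left₀ (by positivity) hε₀half k
  have hfn : Summable fun k => ‖f k‖ := by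
    apply Summable.of_nonneg_of_le (fun k => norm_nonneg _) hfb
    exact (summable_geometric_of_lt_one (by norm_num) (by norm_num)).mul_left C
  have hfs : Summable f := hfn.of_norm
  obtain ⟨g, hg⟩ : ∃ g : A, g = ∑' k, f k := ⟨_, rfl⟩
  -- Cauchy product
  obtain ⟨cc, hcc⟩ : ∃ cc : ℕ → ℂ, cc = fun n => ∑ kl ∈ Finset.HasAntidiagonal.antidiagonal n, μ kl.1 * μ kl.2 :=
    ⟨_, rfl⟩
  obtain ⟨h, hh⟩ : ∃ h : ℕ → A, h = fun n => cc n • U ^ n := ⟨_, rfl⟩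
  have hinner : ∀ n, (∑ kl ∈ Finset.HasAntidiagonal.antidiagonal n, f kl.1 * f kl.2) = h n := by
    intro n
    simp only [hh, hcc, hf]
    rw [Finset.sum_smul]
    refine Finset.sum_congr rfl fun kl hkl => ?_
    have hkl' : kl.1 + kl.2 = n := Finset.HasAntidiagonal.mem_antidiagonal.mp hkl
    simp only [smul_mul_assoc, mul_smul_comm, smul_smul, ← pow_add, hkl']
    ring_nf
  have hhn : Summable fun n => ‖h n‖ := by
    have := summable_norm_sum_mul_antidiagonal_of_summable_norm hfn hfn
    simpa only [hinner] using this
  have hhs : Summable h := hhn.of_norm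
  have hgg : g * g = ∑' n, h n := by
    rw [hg, tsum_mul_tsum_eq_tsum_sum_antidiagonal_of_summable_norm hfn hfn]
    exact tsum_congr hinner
  -- the recursion for the coefficients
  have hrec : ∀ n, μ (n + 1) = -w * cc n := by
    intro n
    simp only [hcc, hμ]
    rw [catalan_succ' n]
    push_cast
    rw [Finset.sum_mul, Finset.mul_sum]
    apply Finset.sum_congr rfl
    intro ij hij
    have hij' : ij.1 + ij.2 = n := Finset.HasAntidiagonal.mem_antidiagonal.mp hij
    rw [← hij']
    ring
  -- the functional equation for g
  have hfun : g = 1 + (-w) • (U * (g * g)) := by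
    have h0 : f 0 = 1 := by rw [hf]; simp [hμ]
    have htail : ∀ k : ℕ, f (k + 1) = ((-w) • (ContinuousLinearMap.mul ℂ A U)) (h k) := by
      intro k
      rw [hf, hh]
      simp only [ContinuousLinearMap.smul_apply, ContinuousLinearMap.mul_apply']
      rw [hrec k, mul_smul_comm, smul_smul, ← pow_succ']
    calc g = f 0 + ∑' k, f (k + 1) := by rw [hg]; exact Summable.tsum_eq_zero_add hfs
    _ = 1 + ∑' k, ((-w) • (ContinuousLinearMap.mul ℂ A U)) (h k) := by
        rw [h0]
        congr 1
        exact tsum_congr htail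
    _ = 1 + ((-w) • (ContinuousLinearMap.mul ℂ A U)) (∑' k, h k) := by
        rw [ContinuousLinearMap.map_tsum _ hhs]
    _ = 1 + (-w) • (U * (g * g)) := by
        rw [← hgg]
        simp only [ContinuousLinearMap.smul_apply, ContinuousLinearMap.mul_apply']
  -- commutation of g with U and T
  have hgU : U * g = g * U := by
    have e1 : U * g = ∑' k, U * f k := by
      rw [hg]; exact ContinuousLinearMap.map_tsum (ContinuousLinearMap.mul ℂ A U) hfs
    have e2 : g * U = ∑' k, f k * U := by
      rw [hg]; exact ContinuousLinearMap.map_tsum ((ContinuousLinearMap.mul ℂ A).flip U) hfs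
    rw [e1, e2]
    refine tsum_congr fun k => ?_
    simp only [hf]
    simp only [mul_smul_comm, smul_mul_assoc, ← pow_succ, ← pow_succ']
  have hgT : T * g = g * T := by
    have e1 : T * g = ∑' k, T * f k := by
      rw [hg]; exact ContinuousLinearMap.map_tsum (ContinuousLinearMap.mul ℂ A T) hfs
    have e2 : g * T = ∑' k, f k * T := by
      rw [hg]; exact ContinuousLinearMap.map_tsum ((ContinuousLinearMap.mul ℂ A).flip T) hfs
    rw [e1, e2]
    refine tsum_congr fun k => ?_
    simp only [hf]
    rw [mul_smul_comm, smul_mul_assoc, (hTU.pow_right k).eq]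
  have hTgc : Commute T g := hgT
  -- define V
  obtain ⟨V, hV⟩ : ∃ V : A, V = b⁻¹ • (U * g) := ⟨_, rfl⟩
  have hVV : V * V = (b⁻¹ * b⁻¹) • (U * (U * (g * g))) := by
    rw [hV, smul_mul_assoc, mul_smul_comm, smul_smul]
    congr 1
    calc U * g * (U * g) = U * (g * (U * g)) := by rw [mul_assoc]
    _ = U * (g * U * g) := by rw [mul_assoc g U g]
    _ = U * (U * g * g) := by rw [hgU]
    _ = U * (U * (g * g)) := by rw [mul_assoc U g g]
  have hUg' : U * g = U + (-w) • (U * (U * (g * g))) := by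
    conv_lhs => rw [hfun]
    rw [mul_add, mul_one, mul_smul_comm]
  have hquad : a • V ^ 2 + b • V = U := by
    rw [pow_two, hVV, hV, smul_smul, smul_smul, hUg']
    have h1 : a * (b⁻¹ * b⁻¹) = w := by rw [hw, pow_two, div_eq_mul_inv, mul_inv_rev]
    have h2 : b * b⁻¹ = 1 := mul_inv_cancel₀ hb
    rw [h1, h2, one_smul, neg_smul]
    abel
  -- factorization V = T * G
  obtain ⟨G, hG⟩ : ∃ G : A, G = b⁻¹ • ((a • T + b • 1) * g) := ⟨_, rfl⟩
  have hVG : V = T * G := by rw [hV, hG, hUfact, mul_assoc, mul_smul_comm]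
  have hTG : Commute T G := by
    rw [hG]
    exact (hT1.mul_right hTgc).smul_right b⁻¹
  have hTV : Commute T V := by rw [hVG]; exact (Commute.refl T).mul_right hTG
  -- the linear relation forces T = V
  have hzero : b • (T - V) + a • ((T - V) * (T + V)) = 0 := by
    have hdiff : (T - V) * (T + V) = T ^ 2 - V ^ 2 := by
      rw [sub_mul, mul_add, mul_add, hTV.eq, pow_two, pow_two]
      abel
    have h9 : a • V ^ 2 + b • V = a • T ^ 2 + b • T := by rw [hquad, hUdef]
    have h10 : a • T ^ 2 + b • T - (a • V ^ 2 + b • V) = 0 := by rw [h9, sub_self]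
    calc b • (T - V) + a • ((T - V) * (T + V))
        = a • T ^ 2 + b • T - (a • V ^ 2 + b • V) := by
          rw [hdiff, smul_sub, smul_sub]; abel
    _ = 0 := h10
  have hiter : T - V = (T - V) * ((-(a / b)) • (T + V)) := by
    have h1 : b • (T - V) = -(a • ((T - V) * (T + V))) := eq_neg_of_add_eq_zero_left hzero
    have h2 : T - V = b⁻¹ • (b • (T - V)) := by rw [smul_smul, inv_mul_cancel₀ hb, one_smul]
    calc T - V = b⁻¹ • (b • (T - V)) := h2
    _ = b⁻¹ • (-(a • ((T - V) * (T + V)))) := by rw [h1]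
    _ = (-(a / b)) • ((T - V) * (T + V)) := by
        rw [smul_neg, smul_smul, ← neg_smul]
        congr 1
        field_simp
    _ = (T - V) * ((-(a / b)) • (T + V)) := (mul_smul_comm _ _ _).symm
  obtain ⟨Q, hQ⟩ : ∃ Q : A, Q = (-(a / b)) • (T + V) := ⟨_, rfl⟩
  have hiterN : ∀ n, T - V = (T - V) * Q ^ n := by
    intro n
    induction n with
    | zero => simp
    | succ n ih => rw [pow_succ, ← mul_assoc, ← ih, hQ, ← hiter]
  have hTplusV : T + V = T * (1 + G) := by rw [mul_add, mul_one, hVG]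
  have hT1G : Commute T (1 + G) := (Commute.one_right T).add_right hTG
  obtain ⟨s, hs0, hsb⟩ : ∃ s : ℝ, 0 < s ∧ ‖-(a / b)‖ * (‖(1 : A) + G‖ + 1) ≤ s :=
    ⟨‖-(a / b)‖ * (‖(1 : A) + G‖ + 1) + 1, by positivity, by linarith⟩
  obtain ⟨ε₂, hε₂0, hε₂s⟩ : ∃ e : ℝ, 0 < e ∧ s * e ≤ 1 / 2 := by
    refine ⟨1 / (2 * s), by positivity, le_of_eq ?_⟩
    field_simp
  obtain ⟨C₂, hC₂1, hC₂⟩ := quasi_decay T hrad hε₂0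
  have hC₂0 : 0 < C₂ := lt_of_lt_of_le one_pos hC₂1
  have hQn : ∀ n, ‖Q ^ n‖ ≤ C₂ * (1 / 2) ^ n := by
    intro n
    rcases Nat.eq_zero_or_pos n with rfl | hn
    · simpa using hC₂ 0
    rw [hQ, smul_pow, hTplusV, hT1G.mul_pow]
    calc ‖(-(a / b)) ^ n • (T ^ n * (1 + G) ^ n)‖
        = ‖(-(a / b)) ^ n‖ * ‖T ^ n * (1 + G) ^ n‖ := norm_smul _ _
    _ ≤ ‖-(a / b)‖ ^ n * (‖T ^ n‖ * ‖(1 + G) ^ n‖) := by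
        rw [norm_pow]
        exact mul_le_mul_of_nonneg_left (norm_mul_le _ _) (by positivity)
    _ ≤ ‖-(a / b)‖ ^ n * ((C₂ * ε₂ ^ n) * (‖(1 : A) + G‖ + 1) ^ n) := by
        apply mul_le_mul_of_nonneg_left _ (by positivity)
        apply mul_le_mul (hC₂ n) _ (norm_nonneg _) (by positivity)
        exact (norm_pow_le' _ hn).trans (pow_le_pow_left₀ (norm_nonneg _) (by linarith) n)
    _ = C₂ * (‖-(a / b)‖ * (‖(1 : A) + G‖ + 1) * ε₂) ^ n := by
        rw [mul_pow, mul_pow]; ring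
    _ ≤ C₂ * (1 / 2) ^ n := by
        apply mul_le_mul_of_nonneg_left _ hC₂0.le
        apply pow_le_pow_left₀ (by positivity)
        calc ‖-(a / b)‖ * (‖(1 : A) + G‖ + 1) * ε₂ ≤ s * ε₂ :=
              mul_le_mul_of_nonneg_right hsb hε₂0.le
        _ ≤ 1 / 2 := hε₂s
  have hTV0 : T = V := by
    have hle : ∀ n : ℕ, ‖T - V‖ ≤ ‖T - V‖ * (C₂ * (1 / 2) ^ n) := by
      intro n
      calc ‖T - V‖ = ‖(T - V) * Q ^ n‖ := by rw [← hiterN n]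
      _ ≤ ‖T - V‖ * ‖Q ^ n‖ := norm_mul_le _ _
      _ ≤ ‖T - V‖ * (C₂ * (1 / 2) ^ n) := mul_le_mul_of_nonneg_left (hQn n) (norm_nonneg _)
    have hlim : Filter.Tendsto (fun n : ℕ => ‖T - V‖ * (C₂ * (1 / 2) ^ n)) Filter.atTop (nhds 0) := by
      have h3 : Filter.Tendsto (fun n : ℕ => ((1 : ℝ) / 2) ^ n) Filter.atTop (nhds 0) :=
        tendsto_pow_atTop_nhds_zero_of_lt_one (by norm_num) (by norm_num)
      have := (h3.const_mul C₂).const_mul ‖T - V‖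
      simpa using this
    have h0 : ‖T - V‖ ≤ 0 := ge_of_tendsto hlim (Filter.Eventually.of_forall hle)
    have h1 : T - V = 0 := norm_eq_zero.mp (le_antisymm h0 (norm_nonneg _))
    exact sub_eq_zero.mp h1
  -- conclusion
  refine ⟨fun k => b⁻¹ * μ k, ?_⟩
  have h1 := (b⁻¹ • (ContinuousLinearMap.mul ℂ A U)).hasSum (hg ▸ hfs.hasSum)
  have hterm : ∀ k, (b⁻¹ • (ContinuousLinearMap.mul ℂ A U)) (f k) = (b⁻¹ * μ k) • U ^ (k + 1) := by
    intro k
    simp only [ContinuousLinearMap.smul_apply, ContinuousLinearMap.mul_apply']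
    rw [hf]
    simp only [mul_smul_comm, smul_smul, ← pow_succ']
  have hval : (b⁻¹ • (ContinuousLinearMap.mul ℂ A U)) g = V := by
    simp only [ContinuousLinearMap.smul_apply, ContinuousLinearMap.mul_apply']
    rw [hV]
  rw [hTV0, ← hval]
  exact HasSum.congr_fun h1 fun k => (hterm k).symm

end Key

set_option maxHeartbeats 1000000 in
lemma key_invariant {E : Type*} [NormedAddCommGroup E] [NormedSpace ℂ E] [CompleteSpace E]
    (T : E →L[ℂ] E) (hT : spectrum ℂ T = {0}) {a c b : ℂ} (hb : b ≠ 0)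
    {M : Submodule ℂ E} (hMc : IsClosed (M : Set E))
    (hM : ∀ x ∈ M, (a • T ^ 2 + b • T + c • (1 : E →L[ℂ] E)) x ∈ M) :
    ∀ x ∈ M, T x ∈ M := by
  have hrad : spectralRadius ℂ T = 0 := by rw [spectralRadius, hT]; simp
  obtain ⟨f, hsum⟩ := sqrt_series_eq T hrad a b hb
  have hU : ∀ x ∈ M, (a • T ^ 2 + b • T) x ∈ M := by
    intro x hx
    have h1 := hM x hx
    have h2 : (a • T ^ 2 + b • T) x = (a • T ^ 2 + b • T + c • (1 : E →L[ℂ] E)) x - c • x := by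
      simp
    rw [h2]
    exact M.sub_mem h1 (M.smul_mem c hx)
  have hUp : ∀ k : ℕ, ∀ x ∈ M, ((a • T ^ 2 + b • T) ^ k) x ∈ M := by
    intro k
    induction k with
    | zero => intro x hx; simpa using hx
    | succ k ih =>
      intro x hx
      rw [pow_succ, ContinuousLinearMap.mul_apply]
      exact ih _ (hU x hx)
  intro x hx
  have happ' := (ContinuousLinearMap.apply ℂ E x).hasSum hsum
  simp only [ContinuousLinearMap.apply_apply] at happ'
  have happ : HasSum (fun k => (f k • (a • T ^ 2 + b • T) ^ (k + 1)) x) (T x) := happ'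
  have hmem : ∀ k, (f k • (a • T ^ 2 + b • T) ^ (k + 1)) x ∈ M := by
    intro k
    rw [ContinuousLinearMap.smul_apply]
    exact M.smul_mem _ (hUp (k + 1) x hx)
  refine hMc.mem_of_tendsto happ.tendsto_sum_nat (Filter.Eventually.of_forall fun n => ?_)
  exact Submodule.sum_mem M fun k _ => hmem k

lemma forward_invariant {E : Type*} [NormedAddCommGroup E] [NormedSpace ℂ E]
    (T : E →L[ℂ] E) (a c b : ℂ) {M : Submodule ℂ E}
    (hM : ∀ x ∈ M, T x ∈ M) :
    ∀ x ∈ M, (a • T ^ 2 + b • T + c • (1 : E →L[ℂ] E)) x ∈ M := by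
  intro x hx
  have h1 : (a • T ^ 2 + b • T + c • (1 : E →L[ℂ] E)) x
      = a • T (T x) + b • T x + c • x := by
    simp [pow_two]
  rw [h1]
  exact M.add_mem (M.add_mem (M.smul_mem _ (hM _ (hM _ hx))) (M.smul_mem _ (hM _ hx)))
    (M.smul_mem _ hx)

theorem stmt_8 {E : Type*} [NormedAddCommGroup E] [NormedSpace ℂ E] [CompleteSpace E]
    [TopologicalSpace.SeparableSpace E] (hdim : ¬ FiniteDimensional ℂ E)
    (T : E →L[ℂ] E) (hT : spectrum ℂ T = {0}) :
    (HasNontrivialClosedInvariantSubspace T ↔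
      ∃ a c b : ℂ, b ≠ 0 ∧ HasNontrivialClosedInvariantSubspace
        (a • T ^ 2 + b • T + c • (1 : E →L[ℂ] E))) ∧
    (HasNontrivialClosedInvariantSubspace T ↔
      ∀ a c b : ℂ, b ≠ 0 → HasNontrivialClosedInvariantSubspace
        (a • T ^ 2 + b • T + c • (1 : E →L[ℂ] E))) := by
  have hfwd : HasNontrivialClosedInvariantSubspace T →
      ∀ a c b : ℂ, b ≠ 0 → HasNontrivialClosedInvariantSubspace
        (a • T ^ 2 + b • T + c • (1 : E →L[ℂ] E)) := by
    rintro ⟨M, h1, h2, h3, h4⟩ a c b hb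
    exact ⟨M, h1, h2, h3, forward_invariant T a c b h4⟩
  have hbwd : (∃ a c b : ℂ, b ≠ 0 ∧ HasNontrivialClosedInvariantSubspace
      (a • T ^ 2 + b • T + c • (1 : E →L[ℂ] E))) →
      HasNontrivialClosedInvariantSubspace T := by
    rintro ⟨a, c, b, hb, M, h1, h2, h3, h4⟩
    exact ⟨M, h1, h2, h3, key_invariant T hT hb h1 h4⟩
  constructor
  · exact ⟨fun h => ⟨0, 0, 1, one_ne_zero, hfwd h 0 0 1 one_ne_zero⟩, hbwd⟩
  · refine ⟨hfwd, fun h => hbwd ⟨0, 0, 1, one_ne_zero, h 0 0 1 one_ne_zero⟩⟩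
end

section
/- Let X be an infinite dimensional separable complex Banach space and T a bounded linear operator on X. Then T has a nontrivial closed invariant subspace if and only if the operators A_T and A_{−T} on X × X have a common nontrivial closed invariant subspace, i.e., a closed subspace N of X × X with {0} ≠ N ≠ X × X that is invariant under both A_T and A_{−T}. -/
/-- The operator `A_T` on `E × E` given by `A_T (x, y) = (y, T x)`. -/
def AOp {E : Type*} [NormedAddCommGroup E] [NormedSpace ℂ E] (T : E →L[ℂ] E) :
    (E × E) →L[ℂ] (E × E) :=
  (ContinuousLinearMap.snd ℂ E E).prod (T.comp (ContinuousLinearMap.fst ℂ E E))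

lemma AOp_apply {E : Type*} [NormedAddCommGroup E] [NormedSpace ℂ E] (T : E →L[ℂ] E)
    (v : E × E) : AOp T v = (v.2, T v.1) := rfl

/-- A nontrivial closed subspace of an infinite dimensional space. -/
lemma exists_nontrivial_closed {E : Type*} [NormedAddCommGroup E] [NormedSpace ℂ E]
    [CompleteSpace E] (hdim : ¬ FiniteDimensional ℂ E) :
    ∃ M : Submodule ℂ E, IsClosed (M : Set E) ∧ M ≠ ⊥ ∧ M ≠ ⊤ := by
  have hnt : Nontrivial E := by
    by_contra h
    have : Subsingleton E := not_nontrivial_iff_subsingleton.mp h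
    exact hdim inferInstance
  obtain ⟨x, hx⟩ := exists_ne (0 : E)
  refine ⟨ℂ ∙ x, Submodule.closed_of_finiteDimensional _, ?_, ?_⟩
  · simpa [Submodule.span_singleton_eq_bot] using hx
  · intro h
    have : FiniteDimensional ℂ (⊤ : Submodule ℂ E) := h ▸ inferInstance
    exact hdim (Submodule.topEquiv : (⊤ : Submodule ℂ E) ≃ₗ[ℂ] E).finiteDimensional

theorem stmt_13 {E : Type*} [NormedAddCommGroup E] [NormedSpace ℂ E] [CompleteSpace E]
    [TopologicalSpace.SeparableSpace E] (hdim : ¬ FiniteDimensional ℂ E)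
    (T : E →L[ℂ] E) :
    (∃ M : Submodule ℂ E, IsClosed (M : Set E) ∧ M ≠ ⊥ ∧ M ≠ ⊤ ∧ ∀ x ∈ M, T x ∈ M) ↔
      (∃ N : Submodule ℂ (E × E), IsClosed (N : Set (E × E)) ∧ N ≠ ⊥ ∧ N ≠ ⊤ ∧
        (∀ v ∈ N, AOp T v ∈ N) ∧ ∀ v ∈ N, AOp (-T) v ∈ N) := by
  constructor
  · rintro ⟨M, hMc, hMb, hMt, hMi⟩
    refine ⟨M.prod M, ?_, ?_, ?_, ?_, ?_⟩
    · exact hMc.prod hMc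
    · simp [Submodule.prod_eq_bot_iff, hMb]
    · simp [Submodule.prod_eq_top_iff, hMt]
    · rintro ⟨x, y⟩ hv
      rw [Submodule.mem_prod] at hv ⊢
      exact ⟨hv.2, hMi _ hv.1⟩
    · rintro ⟨x, y⟩ hv
      rw [Submodule.mem_prod] at hv
      rw [AOp_apply]
      simp only [ContinuousLinearMap.neg_apply]
      exact Submodule.mem_prod.mpr ⟨hv.2, M.neg_mem (hMi _ hv.1)⟩
  · rintro ⟨N, hNc, hNb, hNt, hN1, hN2⟩
    -- basic consequences
    have key1 : ∀ x y : E, (x, y) ∈ N → (y, (0 : E)) ∈ N := by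
      intro x y h
      have h1 := hN1 _ h
      have h2 := hN2 _ h
      rw [AOp_apply] at h1 h2
      simp only [ContinuousLinearMap.neg_apply] at h2
      have := N.smul_mem ((2 : ℂ)⁻¹) (N.add_mem h1 h2)
      simpa [Prod.smul_mk, smul_add, ← two_smul ℂ y, smul_smul] using this
    have key2 : ∀ x y : E, (x, y) ∈ N → ((0 : E), T x) ∈ N := by
      intro x y h
      have h1 := hN1 _ h
      have h2 := hN2 _ h
      rw [AOp_apply] at h1 h2
      simp only [ContinuousLinearMap.neg_apply] at h2
      have := N.smul_mem ((2 : ℂ)⁻¹) (N.sub_mem h1 h2)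
      simpa [Prod.smul_mk, smul_sub, ← two_smul ℂ (T x), smul_smul, sub_eq_add_neg]
        using this
    -- Q = {y : (0, y) ∈ N}
    set Q : Submodule ℂ E := N.comap (LinearMap.inr ℂ E E) with hQ
    have hQmem : ∀ y : E, y ∈ Q ↔ ((0 : E), y) ∈ N := fun y => Iff.rfl
    have hQc : IsClosed (Q : Set E) := by
      have : (Q : Set E) = (fun y : E => ((0 : E), y)) ⁻¹' (N : Set (E × E)) := rfl
      rw [this]
      exact hNc.preimage (Continuous.prodMk_right 0)
    have hQtop : Q ≠ ⊤ := by
      intro h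
      apply hNt
      rw [Submodule.eq_top_iff']
      rintro ⟨x, y⟩
      have hx : ((0 : E), x) ∈ N := (hQmem x).mp (h ▸ Submodule.mem_top)
      have hy : ((0 : E), y) ∈ N := (hQmem y).mp (h ▸ Submodule.mem_top)
      have hx0 : (x, (0 : E)) ∈ N := key1 _ _ hx
      have : (x, (0 : E)) + ((0 : E), y) ∈ N := N.add_mem hx0 hy
      simpa using this
    by_cases hQbot : Q = ⊥
    · -- everything in N is killed by T in both coordinates
      have hker : ∀ v ∈ N, T v.1 = 0 ∧ T v.2 = 0 := by
        rintro ⟨x, y⟩ h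
        have h1 : T x ∈ Q := (hQmem _).mpr (key2 _ _ h)
        have hy0 : (y, (0 : E)) ∈ N := key1 _ _ h
        have h2 : T y ∈ Q := (hQmem _).mpr (key2 _ _ hy0)
        rw [hQbot, Submodule.mem_bot] at h1 h2
        exact ⟨h1, h2⟩
      by_cases hT : LinearMap.ker (T : E →ₗ[ℂ] E) = ⊤
      · -- T = 0, any nontrivial closed subspace works
        obtain ⟨M, hMc, hMb, hMt⟩ := exists_nontrivial_closed hdim
        refine ⟨M, hMc, hMb, hMt, fun x _ => ?_⟩
        have : T x = 0 := by
          have := hT ▸ (Submodule.mem_top : x ∈ (⊤ : Submodule ℂ E))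
          exact this
        rw [this]; exact M.zero_mem
      · refine ⟨LinearMap.ker (T : E →ₗ[ℂ] E), ?_, ?_, hT, ?_⟩
        · exact (ContinuousLinearMap.isClosed_ker T)
        · -- ker T ≠ ⊥ since N ≠ ⊥
          intro hk
          apply hNb
          rw [Submodule.eq_bot_iff]
          rintro ⟨x, y⟩ h
          obtain ⟨h1, h2⟩ := hker _ h
          have hx : x = 0 := by
            have : x ∈ LinearMap.ker (T : E →ₗ[ℂ] E) := h1
            rwa [hk, Submodule.mem_bot] at this
          have hy : y = 0 := by
            have : y ∈ LinearMap.ker (T : E →ₗ[ℂ] E) := h2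
            rwa [hk, Submodule.mem_bot] at this
          simp [hx, hy]
        · intro x hx
          simp only [LinearMap.mem_ker, ContinuousLinearMap.coe_coe] at hx ⊢
          simp [hx]
    · -- Q is the desired subspace
      refine ⟨Q, hQc, hQbot, hQtop, fun y hy => ?_⟩
      have h1 : ((0 : E), y) ∈ N := (hQmem y).mp hy
      have h2 : (y, (0 : E)) ∈ N := key1 _ _ h1
      exact (hQmem _).mpr (key2 _ _ h2)
end

section
/- Let X be an infinite dimensional separable complex Banach space and T a bounded linear operator on X. If A_T² has a nontrivial closed hyperinvariant subspace, then T has a nontrivial closed invariant subspace. -/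
theorem stmt_14 {E : Type*} [NormedAddCommGroup E] [NormedSpace ℂ E] [CompleteSpace E]
    [TopologicalSpace.SeparableSpace E] (hdim : ¬ FiniteDimensional ℂ E)
    (T : E →L[ℂ] E)
    (h : ∃ N : Submodule ℂ (E × E), IsClosed (N : Set (E × E)) ∧ N ≠ ⊥ ∧ N ≠ ⊤ ∧
      ∀ S : (E × E) →L[ℂ] (E × E), S * (AOp T) ^ 2 = (AOp T) ^ 2 * S →
        ∀ v ∈ N, S v ∈ N) :
    ∃ M : Submodule ℂ E, IsClosed (M : Set E) ∧ M ≠ ⊥ ∧ M ≠ ⊤ ∧ ∀ x ∈ M, T x ∈ M := by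
  obtain ⟨N, hNc, hNbot, hNtop, hN⟩ := h
  -- A_T^2 (x,y) = (T x, T y)
  have hA2 : ∀ v : E × E, ((AOp T) ^ 2) v = (T v.1, T v.2) := by
    intro v
    simp [pow_two, AOp, ContinuousLinearMap.mul_apply]
  -- S1 : (x,y) ↦ (x,0)
  set S1 : (E × E) →L[ℂ] (E × E) := (ContinuousLinearMap.fst ℂ E E).prod 0 with hS1
  have hS1c : S1 * (AOp T) ^ 2 = (AOp T) ^ 2 * S1 := by
    ext v <;> simp [hS1, ContinuousLinearMap.mul_apply, hA2]
  -- J : (x,y) ↦ (y,x)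
  set J : (E × E) →L[ℂ] (E × E) :=
    (ContinuousLinearMap.snd ℂ E E).prod (ContinuousLinearMap.fst ℂ E E) with hJ
  have hJc : J * (AOp T) ^ 2 = (AOp T) ^ 2 * J := by
    ext v <;> simp [hJ, ContinuousLinearMap.mul_apply, hA2]
  -- S3 : (x,y) ↦ (T x, 0)
  set S3 : (E × E) →L[ℂ] (E × E) := (T.comp (ContinuousLinearMap.fst ℂ E E)).prod 0 with hS3
  have hS3c : S3 * (AOp T) ^ 2 = (AOp T) ^ 2 * S3 := by
    ext v <;> simp [hS3, ContinuousLinearMap.mul_apply, hA2]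
  -- M = {x | (x,0) ∈ N}
  refine ⟨N.comap (ContinuousLinearMap.inl ℂ E E : E →L[ℂ] E × E).toLinearMap, ?_, ?_, ?_, ?_⟩
  · exact hNc.preimage (ContinuousLinearMap.inl ℂ E E).continuous
  · obtain ⟨v, hvN, hv⟩ := Submodule.exists_mem_ne_zero_of_ne_bot hNbot
    have h1 : (v.1, (0 : E)) ∈ N := by
      have := hN S1 hS1c v hvN
      simpa [hS1] using this
    have h2 : (v.2, (0 : E)) ∈ N := by
      have hJv : (v.2, v.1) ∈ N := by
        have := hN J hJc v hvN
        simpa [hJ] using this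
      have := hN S1 hS1c _ hJv
      simpa [hS1] using this
    rw [Submodule.ne_bot_iff]
    rcases eq_or_ne v.1 0 with h10 | h10
    · refine ⟨v.2, h2, fun h20 => hv ?_⟩
      exact Prod.ext h10 h20
    · exact ⟨v.1, h1, h10⟩
  · intro hMtop
    apply hNtop
    rw [Submodule.eq_top_iff']
    intro v
    have h1 : ((v.1 : E), (0 : E)) ∈ N := by
      have : v.1 ∈ (⊤ : Submodule ℂ E) := trivial
      rw [← hMtop] at this
      exact this
    have h2 : ((v.2 : E), (0 : E)) ∈ N := by
      have : v.2 ∈ (⊤ : Submodule ℂ E) := trivial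
      rw [← hMtop] at this
      exact this
    have h2' : ((0 : E), (v.2 : E)) ∈ N := by
      have := hN J hJc _ h2
      simpa [hJ] using this
    have := N.add_mem h1 h2'
    simpa using this
  · intro x hx
    have : (T x, (0 : E)) ∈ N := by
      have := hN S3 hS3c _ hx
      simpa [hS3] using this
    exact this
end
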